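/- arXiv:1510.01454 — 6 statements merged into one kernel-verified Lean document; each statement's English description precedes it below -/
import Mathlib

section
/- For every positive integer N, the sum over all compositions m = (m₁,…,m_ℓ) of N of the quantity α(m) = (1/m₁)·∏_{j=1}^{ℓ-1} C(m_j + m_{j+1} - 1, m_{j+1}) equals (1/(2N))·C(2N, N). -/
/-- β(m) = ∏_{j=1}^{ℓ-1} C(m_j + m_{j+1} - 1, m_{j+1}) for a list m = (m₁,…,m_ℓ). -/
def betaComp : List ℕ → ℕ
  | [] => 1
  | [_] => 1
  | a :: b :: l => Nat.choose (a + b - 1) b * betaComp (b :: l)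

/-- α(m) = β(m)/m₁ as a rational number. -/
def alphaComp (l : List ℕ) : ℚ := (betaComp l : ℚ) / (l.headI : ℚ)

/-- The finset of compositions of `n` as lists. -/
def cset : ℕ → Finset (List ℕ)
  | 0 => {[]}
  | (n+1) => (Finset.range (n+1)).biUnion
      (fun k => ((cset (n - k)).image (fun l => (k+1) :: l)))
  decreasing_by omega

lemma cset_zero : cset 0 = {[]} := by rw [cset]

lemma cset_succ (n : ℕ) : cset (n+1) = (Finset.range (n+1)).biUnion
    (fun k => ((cset (n - k)).image (fun l => (k+1) :: l))) := by rw [cset]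

lemma sum_cset_succ (f : List ℕ → ℚ) (n : ℕ) :
    ∑ l ∈ cset (n+1), f l
      = ∑ k ∈ Finset.range (n+1), ∑ l ∈ cset (n - k), f ((k+1) :: l) := by
  rw [cset_succ, Finset.sum_biUnion]
  · refine Finset.sum_congr rfl fun k _ => ?_
    rw [Finset.sum_image]
    intro x _ y _ h
    simpa using h
  · intro a _ b _ hab
    simp only [Function.onFun, Finset.disjoint_left]
    intro l hl hl'
    simp only [Finset.mem_image] at hl hl'
    obtain ⟨x, _, hx⟩ := hl
    obtain ⟨y, _, hy⟩ := hl'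
    apply hab
    have h := hx.trans hy.symm
    have : a + 1 = b + 1 := ((List.cons.injEq _ _ _ _).mp h).1
    omega

lemma mem_cset {n : ℕ} {l : List ℕ} :
    l ∈ cset n ↔ l.sum = n ∧ ∀ x ∈ l, 0 < x := by
  induction n using Nat.strong_induction_on generalizing l with
  | _ n ih =>
    match n with
    | 0 =>
      simp only [cset_zero, Finset.mem_singleton]
      constructor
      · rintro rfl; simp
      · rintro ⟨hs, hp⟩
        cases l with
        | nil => rfl
        | cons a t =>
          exfalso
          have := hp a (by simp)
          simp at hs; omega
    | (n+1) =>
      rw [cset_succ]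
      simp only [Finset.mem_biUnion, Finset.mem_range, Finset.mem_image]
      constructor
      · rintro ⟨k, hk, t, ht, rfl⟩
        rw [ih (n - k) (by omega)] at ht
        obtain ⟨hts, htp⟩ := ht
        constructor
        · simp only [List.sum_cons]; omega
        · intro x hx
          rcases List.mem_cons.mp hx with h | h
          · omega
          · exact htp x h
      · rintro ⟨hs, hp⟩
        cases l with
        | nil => simp at hs
        | cons a t =>
          have ha : 0 < a := hp a (by simp)
          simp only [List.sum_cons] at hs
          refine ⟨a - 1, by omega, t, ?_, ?_⟩
          · rw [ih (n - (a-1)) (by omega)]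
            refine ⟨by omega, fun x hx => hp x (List.mem_cons_of_mem _ hx)⟩
          · congr 1; omega

/-- Hockey stick. -/
lemma hockey (a : ℕ) : ∀ n : ℕ,
    ∑ j ∈ Finset.range (n+1), Nat.choose (a+j) j = Nat.choose (a+n+1) n := by
  intro n
  induction n with
  | zero => simp
  | succ n ihn =>
    rw [Finset.sum_range_succ, ihn, ← Nat.add_assoc a n 1,
      Nat.choose_succ_succ (a+n+1) n]

/-- Chu–Vandermonde in "upper-index" form. -/
lemma vand (a : ℕ) : ∀ b n : ℕ,
    ∑ j ∈ Finset.range (n+1), Nat.choose (a+j) j * Nat.choose (b+(n-j)) (n-j)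
      = Nat.choose (a+b+n+1) n := by
  intro b
  induction b with
  | zero =>
    intro n
    have : ∀ j ∈ Finset.range (n+1),
        Nat.choose (a+j) j * Nat.choose (0+(n-j)) (n-j) = Nat.choose (a+j) j := by
      intro j hj
      rw [Nat.zero_add, Nat.choose_self, Nat.mul_one]
    rw [Finset.sum_congr rfl this, hockey]
    simp
  | succ b ihb =>
    intro n
    induction n with
    | zero => simp
    | succ n ihn =>
      rw [Finset.sum_range_succ]
      have hsplit : ∀ j ∈ Finset.range (n+1),
          Nat.choose (a+j) j * Nat.choose ((b+1)+(n+1-j)) (n+1-j)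
            = Nat.choose (a+j) j * Nat.choose (b+(n+1-j)) (n+1-j)
              + Nat.choose (a+j) j * Nat.choose ((b+1)+(n-j)) (n-j) := by
        intro j hj
        simp only [Finset.mem_range] at hj
        have ht : n + 1 - j = (n - j) + 1 := by omega
        rw [ht, ← Nat.mul_add]
        congr 1
        have : (b+1) + ((n-j)+1) = (b + ((n-j)+1)) + 1 := by ring
        rw [this, Nat.choose_succ_succ (b + ((n-j)+1)) (n-j)]
        have : b + ((n-j)+1) = (b+1) + (n-j) := by ring
        rw [Nat.add_comm (Nat.choose _ (n-j)) _, this]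
      rw [Finset.sum_congr rfl hsplit, Finset.sum_add_distrib]
      have e1 : ∑ j ∈ Finset.range (n+1),
          Nat.choose (a+j) j * Nat.choose (b+(n+1-j)) (n+1-j)
            + Nat.choose (a+(n+1)) (n+1) * Nat.choose ((b+1)+(n+1-(n+1))) (n+1-(n+1))
          = Nat.choose (a+b+(n+1)+1) (n+1) := by
        conv_rhs => rw [← ihb (n+1), Finset.sum_range_succ]
        congr 1
        simp
      have h4 : a + (b+1) + n + 1 = a + b + (n+1) + 1 := by ring
      have h5 : a + (b+1) + (n+1) + 1 = (a + b + (n+1) + 1) + 1 := by ring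
      rw [add_right_comm, e1, ihn, h4, h5, Nat.choose_succ_succ (a+b+(n+1)+1) n,
        Nat.add_comm (Nat.choose (a+b+(n+1)+1) n) _]

lemma keyNat (m k : ℕ) :
    ∑ j ∈ Finset.range (m+1),
        (j+1) * Nat.choose (k+j) (j+1) * Nat.choose (2*m-j) (m-j)
      = k * Nat.choose (2*m+k+1) m := by
  have h1 : ∀ j ∈ Finset.range (m+1),
      (j+1) * Nat.choose (k+j) (j+1) * Nat.choose (2*m-j) (m-j)
        = k * (Nat.choose (k+j) j * Nat.choose (m+(m-j)) (m-j)) := by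
    intro j hj
    simp only [Finset.mem_range] at hj
    have e1 : Nat.choose (k+j) (j+1) * (j+1) = Nat.choose (k+j) j * k := by
      rw [Nat.choose_succ_right_eq]
      congr 1
      omega
    have e2 : 2*m-j = m+(m-j) := by omega
    rw [e2, mul_comm ((j:ℕ)+1) _, e1]
    ring
  rw [Finset.sum_congr rfl h1, ← Finset.mul_sum, vand k m m,
    show k+m+m+1 = 2*m+k+1 from by ring]

/-- Weighted sum over compositions of `M` with a prefix block `k`. -/
def Bq (M k : ℕ) : ℚ := ∑ l ∈ cset M, (betaComp (k :: l) : ℚ)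

lemma betaComp_cons (k j : ℕ) (l : List ℕ) :
    betaComp (k :: j :: l) = Nat.choose (k+j-1) j * betaComp (j :: l) := rfl

lemma Bq_zero (k : ℕ) : Bq 0 k = 1 := by
  simp [Bq, cset_zero, betaComp]

lemma Bq_succ (m k : ℕ) : Bq (m+1) k
    = ∑ j ∈ Finset.range (m+1), (Nat.choose (k+j) (j+1) : ℚ) * Bq (m-j) (j+1) := by
  rw [Bq, sum_cset_succ (fun l => (betaComp (k :: l) : ℚ))]
  refine Finset.sum_congr rfl fun j hj => ?_
  rw [Bq, Finset.mul_sum]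
  refine Finset.sum_congr rfl fun l hl => ?_
  rw [betaComp_cons, show k+(j+1)-1 = k+j from by omega]
  push_cast
  ring

lemma L5 : ∀ M k : ℕ, 1 ≤ k →
    Bq M k * ((M : ℚ) + k) = k * Nat.choose (2*M+k-1) M := by
  intro M
  induction M using Nat.strong_induction_on with
  | _ M ih =>
    match M with
    | 0 =>
      intro k hk
      rw [Bq_zero]
      simp
    | (m+1) =>
      intro k hk
      have key : Bq (m+1) k * ((m:ℚ)+1) = k * Nat.choose (2*m+k+1) m := by
        rw [Bq_succ, Finset.sum_mul]
        have step : ∀ j ∈ Finset.range (m+1),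
            (Nat.choose (k+j) (j+1) : ℚ) * Bq (m-j) (j+1) * ((m:ℚ)+1)
              = ((j+1) * Nat.choose (k+j) (j+1) * Nat.choose (2*m-j) (m-j) : ℕ) := by
          intro j hj
          simp only [Finset.mem_range] at hj
          have hij := ih (m-j) (by omega) (j+1) (by omega)
          have hc1 : ((m-j : ℕ) : ℚ) + ((j:ℚ)+1) = (m:ℚ)+1 := by
            rw [Nat.cast_sub (by omega)]; ring
          have hc2 : 2*(m-j)+(j+1)-1 = 2*m-j := by omega
          rw [hc2] at hij
          push_cast at hij
          rw [hc1] at hij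
          rw [mul_assoc, hij]
          push_cast
          ring
        rw [Finset.sum_congr rfl step, ← Nat.cast_sum, keyNat]
        push_cast
        ring
      have hmul : ((m:ℚ)+1+k) * (Nat.choose (2*m+k+1) m : ℚ)
          = ((m:ℚ)+1) * (Nat.choose (2*m+k+1) (m+1) : ℚ) := by
        have := Nat.choose_succ_right_eq (2*m+k+1) m
        have h2 : 2*m+k+1 - m = m+k+1 := by omega
        rw [h2] at this
        have := congrArg (fun x : ℕ => (x : ℚ)) this
        push_cast at this
        linarith [this]
      have hcancel : Bq (m+1) k * (((m:ℚ)+1) + k) * ((m:ℚ)+1)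
          = (k : ℚ) * Nat.choose (2*(m+1)+k-1) (m+1) * ((m:ℚ)+1) := by
        have he : 2*(m+1)+k-1 = 2*m+k+1 := by omega
        rw [he]
        calc Bq (m+1) k * (((m:ℚ)+1) + k) * ((m:ℚ)+1)
            = (Bq (m+1) k * ((m:ℚ)+1)) * (((m:ℚ)+1) + k) := by ring
          _ = (k : ℚ) * Nat.choose (2*m+k+1) m * (((m:ℚ)+1) + k) := by rw [key]
          _ = (k : ℚ) * (((m:ℚ)+1+k) * Nat.choose (2*m+k+1) m) := by ring
          _ = (k : ℚ) * (((m:ℚ)+1) * Nat.choose (2*m+k+1) (m+1)) := by rw [hmul]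
          _ = (k : ℚ) * Nat.choose (2*m+k+1) (m+1) * ((m:ℚ)+1) := by ring
      have hne : ((m:ℚ)+1) ≠ 0 := by positivity
      have hfin := mul_right_cancel₀ hne hcancel
      push_cast at hfin ⊢
      linarith [hfin]

/-- For every positive integer `N`, the sum of `α(m)` over all compositions `m` of `N`
equals `(1/(2N))·C(2N,N)`. -/
theorem sum_alpha_over_compositions (N : ℕ) (hN : 1 ≤ N) :
    ∑ m : Composition N, alphaComp m.blocks
      = (Nat.choose (2 * N) N : ℚ) / (2 * N) := by
  obtain ⟨n, rfl⟩ : ∃ n, N = n + 1 := ⟨N - 1, by omega⟩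
  -- step A: sum over Composition = sum over cset
  have hA : ∑ m : Composition (n+1), alphaComp m.blocks
      = ∑ l ∈ cset (n+1), alphaComp l := by
    refine Finset.sum_bij (fun m _ => m.blocks) ?_ ?_ ?_ ?_
    · intro m _
      exact mem_cset.mpr ⟨m.blocks_sum, fun x hx => m.blocks_pos hx⟩
    · intro a _ b _ h
      exact Composition.ext h
    · intro l hl
      obtain ⟨hs, hp⟩ := mem_cset.mp hl
      exact ⟨⟨l, fun hx => hp _ hx, hs⟩, Finset.mem_univ _, rfl⟩
    · intro m _; rfl
  rw [hA, sum_cset_succ alphaComp n]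
  have hB : ∀ k ∈ Finset.range (n+1),
      ∑ l ∈ cset (n-k), alphaComp ((k+1) :: l)
        = (Nat.choose (2*n-k) (n-k) : ℚ) / ((n:ℚ)+1) := by
    intro k hk
    simp only [Finset.mem_range] at hk
    have h1 : ∑ l ∈ cset (n-k), alphaComp ((k+1) :: l)
        = Bq (n-k) (k+1) / ((k:ℚ)+1) := by
      rw [Bq, Finset.sum_div]
      refine Finset.sum_congr rfl fun l hl => ?_
      simp only [alphaComp, List.headI]
      push_cast
      ring
    have h2 := L5 (n-k) (k+1) (by omega)
    have hc1 : ((n-k : ℕ) : ℚ) + ((k:ℚ)+1) = (n:ℚ)+1 := by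
      rw [Nat.cast_sub (by omega)]; ring
    have hc2 : 2*(n-k)+(k+1)-1 = 2*n-k := by omega
    rw [hc2] at h2
    push_cast at h2
    rw [hc1] at h2
    rw [h1]
    have hk1 : ((k:ℚ)+1) ≠ 0 := by positivity
    have hn1 : ((n:ℚ)+1) ≠ 0 := by positivity
    field_simp
    linarith [h2]
  rw [Finset.sum_congr rfl hB]
  rw [← Finset.sum_div]
  have hrefl : ∑ k ∈ Finset.range (n+1), (Nat.choose (2*n-k) (n-k) : ℚ)
      = ∑ j ∈ Finset.range (n+1), (Nat.choose (n+j) j : ℚ) := by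
    rw [← Finset.sum_range_reflect (fun j => (Nat.choose (n+j) j : ℚ)) (n+1)]
    refine Finset.sum_congr rfl fun k hk => ?_
    simp only [Finset.mem_range] at hk
    congr 2 ; omega
  rw [hrefl, ← Nat.cast_sum, hockey n n]
  -- now: C(2n+1, n) / (n+1) = C(2n+2, n+1) / (2n+2)
  have hdouble : Nat.choose (2*(n+1)) (n+1) = 2 * Nat.choose (n+n+1) n := by
    have h1 : 2*(n+1) = (2*n+1) + 1 := by ring
    rw [h1, Nat.choose_succ_succ (2*n+1) n]
    have h2 : Nat.choose (2*n+1) (n+1) = Nat.choose (2*n+1) n := by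
      rw [show n+1 = 2*n+1-n from by omega, Nat.choose_symm (by omega)]
    rw [h2]
    have h3 : 2*n+1 = n+n+1 := by ring
    rw [h3]
    ring
  rw [hdouble]
  push_cast
  have hn1 : ((n:ℚ)+1) ≠ 0 := by positivity
  field_simp
end

section
/- For every positive integer N, the sum over all compositions m = (m₁,…,m_ℓ) of N of β(m) = ∏_{j=1}^{ℓ-1} C(m_j + m_{j+1} - 1, m_{j+1}) equals the Catalan number C_N = (1/(N+1))·C(2N, N). -/
def comps : ℕ → Finset (List ℕ)
  | 0 => {[]}
  | n+1 => (Finset.range (n+1)).attach.biUnion fun k =>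
      (comps k.1).image (List.cons (n+1-k.1))
  decreasing_by exact Finset.mem_range.mp k.2

theorem sum_comps_succ {M : Type*} [AddCommMonoid M] (n : ℕ) (f : List ℕ → M) :
    ∑ l ∈ comps (n+1), f l
      = ∑ k ∈ Finset.range (n+1), ∑ l ∈ comps k, f ((n+1-k) :: l) := by
  rw [comps]
  rw [Finset.sum_biUnion]
  · rw [← Finset.sum_attach (Finset.range (n+1)) (fun k => ∑ l ∈ comps k, f ((n+1-k) :: l))]
    refine Finset.sum_congr rfl fun k _ => ?_
    rw [Finset.sum_image]
    intro x _ y _ h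
    exact List.cons_injective h
  · intro x _ y _ hxy
    refine Finset.disjoint_left.mpr fun l hlx hly => ?_
    obtain ⟨lx, _, rfl⟩ := Finset.mem_image.mp hlx
    obtain ⟨ly, _, hy⟩ := Finset.mem_image.mp hly
    apply hxy
    have hx2 := Finset.mem_range.mp x.2
    have hy2 := Finset.mem_range.mp y.2
    have : n + 1 - x.1 = n + 1 - y.1 := (List.cons.injEq _ _ _ _ ▸ hy.symm : _ ∧ _).1
    have : x.1 = y.1 := by omega
    exact Subtype.ext this

theorem mem_comps : ∀ (n : ℕ) (l : List ℕ),
    l ∈ comps n ↔ l.sum = n ∧ ∀ x ∈ l, 0 < x := by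
  intro n
  induction n using Nat.strong_induction_on with
  | _ n ih =>
    intro l
    match n with
    | 0 =>
      simp only [comps, Finset.mem_singleton]
      constructor
      · rintro rfl; simp
      · rintro ⟨hs, hp⟩
        cases l with
        | nil => rfl
        | cons a t =>
          exfalso
          have := hp a (by simp)
          simp [List.sum_cons] at hs
          omega
    | n+1 =>
      rw [comps]
      simp only [Finset.mem_biUnion, Finset.mem_attach, true_and, Finset.mem_image,
        Subtype.exists, Finset.mem_range]
      constructor
      · rintro ⟨k, hk, l', hl', rfl⟩
        obtain ⟨hs, hp⟩ := (ih k hk l').mp hl'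
        refine ⟨by simp [hs]; omega, ?_⟩
        intro x hx
        rcases List.mem_cons.mp hx with rfl | hx
        · omega
        · exact hp x hx
      · rintro ⟨hs, hp⟩
        cases l with
        | nil => simp at hs
        | cons a t =>
          have ha : 0 < a := hp a (by simp)
          have hts : t.sum = n + 1 - a := by simp [List.sum_cons] at hs; omega
          have hta : a ≤ n + 1 := by simp [List.sum_cons] at hs; omega
          refine ⟨n + 1 - a, by omega, t, ?_, ?_⟩
          · exact (ih (n+1-a) (by omega) t).mpr ⟨hts, fun x hx => hp x (List.mem_cons_of_mem _ hx)⟩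
          · congr 1; omega

def B : ℕ → ℕ → ℕ
  | _, 0 => 1
  | 0, _+1 => 0
  | a+1, n+1 => B a (n+1) + B (a+2) n
  termination_by a n => (n, a)

@[simp] theorem B_zero (a : ℕ) : B a 0 = 1 := by cases a <;> simp [B]
@[simp] theorem B_zero_succ (n : ℕ) : B 0 (n+1) = 0 := by simp [B]
theorem B_succ_succ (a n : ℕ) : B (a+1) (n+1) = B a (n+1) + B (a+2) n := by rw [B]

def Lsum (a k m : ℕ) : ℕ := ∑ c ∈ Finset.range (m+1), Nat.choose (a + c) c * B (c + k) (m - c)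

theorem L_eq : ∀ (m a k : ℕ), Lsum a k m = B (a + k + 1) m := by
  intro m
  induction m using Nat.strong_induction_on with
  | _ m ihm =>
    intro a
    induction a with
    | zero =>
      intro k
      match m with
      | 0 => simp [Lsum]
      | m+1 =>
        rw [Lsum, Finset.sum_range_succ']
        have h1 : ∀ i, Nat.choose (0 + (i+1)) (i+1) * B ((i+1) + k) (m + 1 - (i+1))
            = Nat.choose (0 + i) i * B (i + (k+1)) (m - i) := by
          intro i
          rw [Nat.zero_add, Nat.zero_add, Nat.choose_self, Nat.choose_self]
          congr 2 <;> omega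
        rw [Finset.sum_congr rfl (fun i _ => h1 i)]
        have : (∑ i ∈ Finset.range (m+1), Nat.choose (0 + i) i * B (i + (k+1)) (m - i))
            = Lsum 0 (k+1) m := rfl
        rw [this, ihm m (Nat.lt_succ_self m) 0 (k+1)]
        simp only [Nat.choose_zero_right, one_mul, Nat.sub_zero, Nat.zero_add]
        rw [B_succ_succ k m, show k + 1 + 1 = k + 2 by omega]
        omega
    | succ a iha =>
      intro k
      match m with
      | 0 => simp [Lsum]
      | m+1 =>
        have key : Lsum (a+1) k (m+1) = Lsum a k (m+1) + Lsum (a+1) (k+1) m := by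
          rw [Lsum, Lsum, Lsum, Finset.sum_range_succ' (fun c => Nat.choose (a+1+c) c * B (c + k) (m+1-c)),
            Finset.sum_range_succ' (fun c => Nat.choose (a+c) c * B (c + k) (m+1-c))]
          have h1 : ∀ i, Nat.choose (a+1+(i+1)) (i+1) * B ((i+1) + k) (m + 1 - (i+1))
              = Nat.choose (a+(i+1)) (i+1) * B ((i+1) + k) (m + 1 - (i+1))
                + Nat.choose (a+1+i) i * B (i + (k+1)) (m - i) := by
            intro i
            have hp : Nat.choose (a+1+(i+1)) (i+1) = Nat.choose (a+(i+1)) (i+1) + Nat.choose (a+i+1) i := by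
              rw [show a+1+(i+1) = (a+i+1)+1 by omega]
              rw [Nat.choose_succ_succ]
              rw [show a + (i+1) = a + i + 1 by omega]
              simp only [Nat.succ_eq_add_one]
              omega
            rw [hp, Nat.add_mul]
            congr 2
            · rw [show a+1+i = a+i+1 by omega]
            · congr 1 <;> omega
          rw [Finset.sum_congr rfl (fun i _ => h1 i)]
          rw [Finset.sum_add_distrib]
          simp only [Nat.choose_zero_right, one_mul, Nat.zero_add, Nat.sub_zero]
          omega
        rw [key, iha k, ihm m (Nat.lt_succ_self m) (a+1) (k+1)]
        rw [show a + 1 + (k+1) + 1 = (a + k + 1) + 2 by omega,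
          show a + 1 + k + 1 = (a + k + 1) + 1 by omega]
        exact (B_succ_succ (a+k+1) m).symm

theorem betaComp_cons_cons (a b : ℕ) (l : List ℕ) :
    betaComp (a :: b :: l) = Nat.choose (a + b - 1) b * betaComp (b :: l) := rfl

def Hsum (a n : ℕ) : ℕ := ∑ l ∈ comps n, betaComp (a :: l)

@[simp] theorem Hsum_zero (a : ℕ) : Hsum a 0 = 1 := by
  simp [Hsum, comps, betaComp]

theorem Hsum_succ (a n : ℕ) : Hsum a (n+1)
    = ∑ k ∈ Finset.range (n+1),
        Nat.choose (a + (n+1-k) - 1) (n+1-k) * Hsum (n+1-k) k := by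
  rw [Hsum, sum_comps_succ n (fun l => betaComp (a :: l))]
  refine Finset.sum_congr rfl fun k _ => ?_
  rw [Hsum, Finset.mul_sum]
  refine Finset.sum_congr rfl fun l _ => ?_
  rw [betaComp_cons_cons]

theorem Hsum_eq_B : ∀ (n a : ℕ), Hsum (a+1) n = B (a+1) n := by
  intro n
  induction n using Nat.strong_induction_on with
  | _ n ih =>
    intro a
    match n with
    | 0 => simp
    | n+1 =>
      rw [Hsum_succ]
      have step : ∀ k ∈ Finset.range (n+1),
          Nat.choose (a + 1 + (n+1-k) - 1) (n+1-k) * Hsum (n+1-k) k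
            = Nat.choose (a + 1 + (n+1-k) - 1) (n+1-k) * B (n+1-k) k := by
        intro k hk
        have hk' := Finset.mem_range.mp hk
        have h1 : n + 1 - k = (n - k) + 1 := by omega
        rw [h1, ih k hk' (n-k)]
      rw [Finset.sum_congr rfl step]
      have refl := Finset.sum_range_reflect
        (fun k => Nat.choose (a + 1 + (n+1-k) - 1) (n+1-k) * B (n+1-k) k) (n+1)
      rw [← refl]
      have expand : Lsum a 0 (n+1)
          = ∑ j ∈ Finset.range (n+1),
              Nat.choose (a + (j+1)) (j+1) * B ((j+1) + 0) (n + 1 - (j+1)) := by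
        rw [Lsum, Finset.sum_range_succ']
        simp
      have congrs : ∀ j ∈ Finset.range (n+1),
          Nat.choose (a + 1 + (n+1-(n+1-1-j)) - 1) (n+1-(n+1-1-j)) * B (n+1-(n+1-1-j)) (n+1-1-j)
            = Nat.choose (a + (j+1)) (j+1) * B ((j+1) + 0) (n + 1 - (j+1)) := by
        intro j hj
        have hj' := Finset.mem_range.mp hj
        have e1 : n+1-(n+1-1-j) = j+1 := by omega
        rw [e1]
        congr 1
        · congr 1; omega
        · congr 1 <;> omega
      rw [Finset.sum_congr rfl congrs, ← expand, L_eq]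

theorem total_eq_B (n : ℕ) : ∑ l ∈ comps (n+1), betaComp l = B 1 (n+1) := by
  rw [sum_comps_succ n betaComp]
  rw [show (1:ℕ) = 0 + 1 from rfl, ← Hsum_eq_B (n+1) 0, Hsum_succ]
  refine Finset.sum_congr rfl fun k hk => ?_
  have hk' := Finset.mem_range.mp hk
  have h1 : 0 + 1 + (n+1-k) - 1 = n + 1 - k := by omega
  rw [h1, Nat.choose_self, one_mul, Hsum]

theorem B_cast : ∀ (n a : ℕ), (B a (n+1) : ℚ)
    = (Nat.choose (2*n+a+1) (n+1) : ℚ) - Nat.choose (2*n+a+1) n := by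
  intro n
  induction n using Nat.strong_induction_on with
  | _ n ih =>
    intro a
    induction a with
    | zero =>
      have hsymm : Nat.choose (2*n+1) (n+1) = Nat.choose (2*n+1) n := by
        have := Nat.choose_symm (n := 2*n+1) (k := n) (by omega)
        rw [show 2*n+1-n = n+1 by omega] at this
        exact this
      simp [hsymm]
    | succ a iha =>
      rw [B_succ_succ]
      match n with
      | 0 =>
        push_cast
        rw [iha]
        norm_num [Nat.choose_one_right]
      | m+1 =>
        have h2 := ih m (by omega) (a+2)
        rw [Nat.cast_add, iha, h2]
        have p1 : Nat.choose (2*(m+1)+(a+1)+1) (m+2) =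
            Nat.choose (2*(m+1)+a+1) (m+1) + Nat.choose (2*(m+1)+a+1) (m+2) := by
          rw [show 2*(m+1)+(a+1)+1 = (2*(m+1)+a+1)+1 by omega]
          exact Nat.choose_succ_succ _ _
        have p2 : Nat.choose (2*(m+1)+(a+1)+1) (m+1) =
            Nat.choose (2*(m+1)+a+1) m + Nat.choose (2*(m+1)+a+1) (m+1) := by
          rw [show 2*(m+1)+(a+1)+1 = (2*(m+1)+a+1)+1 by omega]
          exact Nat.choose_succ_succ _ _
        rw [show m+1+1 = m+2 by omega, p1, p2,
          show 2*m+(a+2)+1 = 2*(m+1)+a+1 by omega]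
        push_cast
        ring

theorem B_one_eq_catalan : ∀ n, B 1 n = catalan n := by
  intro n
  match n with
  | 0 => simp
  | n+1 =>
    have hcast := B_cast n 1
    have hid : Nat.choose (2*n+2) (n+1) * (n+1) = Nat.choose (2*n+2) n * (n+2) := by
      have := Nat.choose_succ_right_eq (2*n+2) n
      rw [show 2*n+2-n = n+2 by omega] at this
      exact this
    have hcat : (n+2) * catalan (n+1) = Nat.choose (2*n+2) (n+1) := by
      have := succ_mul_catalan_eq_centralBinom (n+1)
      rw [Nat.centralBinom] at this
      rw [show 2*(n+1) = 2*n+2 by omega] at this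
      exact this
    have key : ((B 1 (n+1) : ℚ)) * (n+2) = ((catalan (n+1) : ℚ)) * (n+2) := by
      rw [hcast, show 2*n+1+1 = 2*n+2 by omega]
      have h1 : (Nat.choose (2*n+2) (n+1) : ℚ) * (n+1) = (Nat.choose (2*n+2) n : ℚ) * (n+2) := by
        exact_mod_cast congrArg (Nat.cast (R := ℚ)) hid
      have h2 : ((catalan (n+1) : ℚ)) * (n+2) = (Nat.choose (2*n+2) (n+1) : ℚ) := by
        rw [mul_comm]
        exact_mod_cast congrArg (Nat.cast (R := ℚ)) hcat
      rw [h2]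
      nlinarith [h1]
    have h3 : ((B 1 (n+1) : ℚ)) = ((catalan (n+1) : ℚ)) := by
      have hne : ((n:ℚ)+2) ≠ 0 := by positivity
      exact mul_right_cancel₀ hne key
    exact_mod_cast h3

theorem sum_composition {M : Type*} [AddCommMonoid M] (N : ℕ) (f : List ℕ → M) :
    ∑ m : Composition N, f m.blocks = ∑ l ∈ comps N, f l := by
  refine Finset.sum_bij (fun m _ => m.blocks) ?_ ?_ ?_ ?_
  · intro m _
    exact (mem_comps N m.blocks).mpr ⟨m.blocks_sum, fun x hx => m.blocks_pos hx⟩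
  · intro m1 _ m2 _ h
    cases m1; cases m2; simpa using h
  · intro l hl
    obtain ⟨hs, hp⟩ := (mem_comps N l).mp hl
    exact ⟨⟨l, fun hx => hp _ hx, hs⟩, Finset.mem_univ _, rfl⟩
  · intro m _; rfl


/-- For every positive integer `N`, the sum of `β(m)` over all compositions `m` of `N`
equals the Catalan number `C_N = (1/(N+1))·C(2N,N)`. -/
theorem sum_beta_over_compositions (N : ℕ) (hN : 1 ≤ N) :
    (∑ m : Composition N, (betaComp m.blocks : ℚ))
      = (Nat.choose (2 * N) N : ℚ) / (N + 1) ∧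
    ∑ m : Composition N, betaComp m.blocks = catalan N := by
  obtain ⟨n, rfl⟩ : ∃ n, N = n + 1 := ⟨N - 1, by omega⟩
  have hnat : ∑ m : Composition (n+1), betaComp m.blocks = catalan (n+1) := by
    rw [sum_composition, total_eq_B, B_one_eq_catalan]
  refine ⟨?_, hnat⟩
  have hq : (∑ m : Composition (n+1), (betaComp m.blocks : ℚ)) = (catalan (n+1) : ℚ) := by
    rw [← Nat.cast_sum, hnat]
  rw [hq, eq_div_iff (by push_cast; positivity)]
  have hcat := succ_mul_catalan_eq_centralBinom (n+1)
  rw [Nat.centralBinom] at hcat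
  have h2 : ((n:ℚ)+1+1) * (catalan (n+1) : ℚ) = (Nat.choose (2*(n+1)) (n+1) : ℚ) := by
    exact_mod_cast congrArg (Nat.cast (R := ℚ)) hcat
  push_cast
  push_cast at h2
  linarith [h2]
end

section
/- For every composition m = (m₁,…,m_ℓ) of N = |m|, the number of Dyck paths of length 2N which take exactly 2m_j steps at level j for each j = 1,…,ℓ (i.e., lattice loops based at 1 in {1,…,ℓ+1} traversing the edge (j, j+1) exactly 2m_j times) equals β(m) = ∏_{j=1}^{ℓ-1} C(m_j + m_{j+1} - 1, m_{j+1}). -/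
/-- `π` is a loop of length `2N` in the lattice `Λ_n = {1,…,n}`; we normalize `π j = 0`
outside the domain `{0,…,2N}` so that the collection of loops is an honest set of maps. -/
def IsLoop (n N : ℕ) (π : ℕ → ℕ) : Prop :=
  (∀ j, 2 * N < j → π j = 0) ∧
  (∀ j, j ≤ 2 * N → 1 ≤ π j ∧ π j ≤ n) ∧
  π 0 = π (2 * N) ∧
  ∀ j, j < 2 * N → (π (j + 1) = π j + 1 ∨ π j = π (j + 1) + 1)

/-- The number of times the loop `π` (of length `2N`) traverses the edge `(v, v+1)`,
counting both directions. -/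
def edgeCount (N : ℕ) (π : ℕ → ℕ) (v : ℕ) : ℕ :=
  ((Finset.range (2 * N)).filter
    (fun j => (π j = v ∧ π (j + 1) = v + 1) ∨ (π j = v + 1 ∧ π (j + 1) = v))).card

/-- `π` traverses each edge `(v, v+1)`, `1 ≤ v ≤ ℓ`, exactly `2·m_v` times, where the
`m_v` are the parts of the list `l`. -/
def Traverses (N : ℕ) (l : List ℕ) (π : ℕ → ℕ) : Prop :=
  ∀ v, 1 ≤ v → v ≤ l.length → edgeCount N π v = 2 * l.getD (v - 1) 0

namespace DyckCount


def Stp (x y : ℕ) : Prop := y = x + 1 ∨ x = y + 1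

instance : DecidableRel Stp := fun x y => by unfold Stp; infer_instance

def cross (v x y : ℕ) : Prop := (x = v ∧ y = v + 1) ∨ (x = v + 1 ∧ y = v)

instance (v x y : ℕ) : Decidable (cross v x y) := by unfold cross; infer_instance

def ec (v : ℕ) : List ℕ → ℕ
  | x :: y :: r => (if cross v x y then 1 else 0) + ec v (y :: r)
  | _ => 0

def P (ms h : List ℕ) : Prop :=
  h.Chain' Stp ∧ (∀ x ∈ h, 1 ≤ x ∧ x ≤ ms.length + 1) ∧
  h.head? = some 1 ∧ h.getLast? = some 1 ∧ ∀ i, ec (i + 1) h = 2 * ms.getD i 0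

def spike (t : ℕ) : ℕ → List ℕ
  | 0 => []
  | c + 1 => (t + 1) :: t :: spike t c

def ins (t : ℕ) : List ℕ → List ℕ → List ℕ
  | _, [] => []
  | [], x :: r => x :: ins t [] r
  | c :: cs', x :: r => if x = t then x :: (spike t c ++ ins t cs' r) else x :: ins t (c :: cs') r

def rem (t : ℕ) : List ℕ → List ℕ
  | [] => []
  | [x] => [x]
  | x :: y :: r => if x = t + 1 then rem t r else x :: rem t (y :: r)

def cnts (t : ℕ) : List ℕ → List ℕ
  | [] => []
  | [x] => if x = t then [0] else []
  | x :: y :: r =>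
    if x = t then
      if y = t + 1 then (cnts t r).modifyHead (· + 1)
      else 0 :: cnts t (y :: r)
    else cnts t (y :: r)



lemma cross_up (v x : ℕ) : cross v x (x + 1) ↔ v = x := by unfold cross; omega
lemma cross_down (v x : ℕ) : cross v (x + 1) x ↔ v = x := by unfold cross; omega

lemma ec_nil (v : ℕ) : ec v [] = 0 := rfl
lemma ec_single (v x : ℕ) : ec v [x] = 0 := rfl

lemma ec_cons (v x : ℕ) (L : List ℕ) :
    ec v (x :: L) = (L.head?.elim 0 fun y => if cross v x y then 1 else 0) + ec v L := by
  cases L <;> simp [ec]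

lemma ins_nil (t : ℕ) (cs : List ℕ) : ins t cs [] = [] := by cases cs <;> rfl

lemma ins_nil_cs (t : ℕ) : ∀ h : List ℕ, ins t [] h = h
  | [] => rfl
  | x :: r => by rw [ins]; rw [ins_nil_cs t r]

lemma ins_cons_ne (t : ℕ) (cs : List ℕ) {x : ℕ} (hx : x ≠ t) (r : List ℕ) :
    ins t cs (x :: r) = x :: ins t cs r := by
  cases cs <;> simp [ins, hx]

lemma ins_cons_t (t c : ℕ) (cs r : List ℕ) :
    ins t (c :: cs) (t :: r) = t :: (spike t c ++ ins t cs r) := by simp [ins]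

lemma ins_head? (t : ℕ) (cs h : List ℕ) : (ins t cs h).head? = h.head? := by
  cases h with
  | nil => rw [ins_nil]
  | cons x r =>
    by_cases hx : x = t
    · subst hx
      cases cs with
      | nil => rw [ins_nil_cs]
      | cons c cs' => rw [ins_cons_t]; rfl
    · rw [ins_cons_ne t cs hx]; rfl

lemma ins_ne_nil (t : ℕ) (cs : List ℕ) {h : List ℕ} (hh : h ≠ []) : ins t cs h ≠ [] := by
  intro hcon
  have := ins_head? t cs h
  rw [hcon] at this
  cases h
  · exact hh rfl
  · simp at this

lemma spike_chain (t c : ℕ) (W : List ℕ) :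
    List.Chain' Stp (t :: (spike t c ++ W)) ↔ List.Chain' Stp (t :: W) := by
  induction c with
  | zero => simp [spike]
  | succ c ih =>
    show List.Chain' Stp (t :: (t+1) :: t :: (spike t c ++ W)) ↔ _
    unfold List.Chain' at ih ⊢
    rw [List.isChain_cons_cons, List.isChain_cons_cons, ih]
    have h1 : Stp t (t + 1) := Or.inl rfl
    have h2 : Stp (t + 1) t := Or.inr rfl
    tauto

lemma mem_spike {t c x : ℕ} (hx : x ∈ spike t c) : x = t + 1 ∨ x = t := by
  induction c with
  | zero => simp [spike] at hx
  | succ c ih =>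
    rcases hx with _ | ⟨_, hx⟩
    · tauto
    · rcases hx with _ | ⟨_, hx⟩
      · tauto
      · exact ih hx

lemma spike_getLast (t c : ℕ) (W : List ℕ) :
    (t :: (spike t c ++ W)).getLast? = (t :: W).getLast? := by
  induction c with
  | zero => simp [spike]
  | succ c ih =>
    show (t :: (t+1) :: t :: (spike t c ++ W)).getLast? = _
    rw [List.getLast?_cons_cons, List.getLast?_cons_cons]
    exact ih

lemma ec_spike (v t c : ℕ) (W : List ℕ) :
    ec v (t :: (spike t c ++ W)) = (if v = t then 2 * c else 0) + ec v (t :: W) := by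
  induction c with
  | zero => simp [spike]
  | succ c ih =>
    show ec v (t :: (t+1) :: t :: (spike t c ++ W)) = _
    rw [ec, ec, ih]
    simp only [cross_up, cross_down]
    by_cases hv : v = t <;> simp [hv] <;> omega

lemma ins_chain (t : ℕ) : ∀ (h cs : List ℕ), List.Chain' Stp h →
    List.Chain' Stp (ins t cs h)
  | [], cs, _ => by rw [ins_nil]; exact List.isChain_nil
  | x :: r, cs, hc => by
    have hr := (List.isChain_cons.1 hc).2
    have hxr := (List.isChain_cons.1 hc).1
    by_cases hx : x = t
    · subst hx
      cases cs with
      | nil => rwa [ins_nil_cs]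
      | cons c cs' =>
        rw [ins_cons_t, spike_chain]
        unfold List.Chain'; rw [List.isChain_cons]
        refine ⟨?_, ins_chain x r cs' hr⟩
        intro y hy
        rw [ins_head? x cs' r] at hy
        exact hxr y hy
    · rw [ins_cons_ne t cs hx]
      unfold List.Chain'; rw [List.isChain_cons]
      refine ⟨?_, ins_chain t r cs hr⟩
      intro y hy
      rw [ins_head? t cs r] at hy
      exact hxr y hy

lemma ins_mem (t : ℕ) : ∀ (h cs : List ℕ) (y : ℕ), y ∈ ins t cs h →
    y ∈ h ∨ y = t + 1 ∨ y = t
  | [], cs, y, hy => by rw [ins_nil] at hy; simp at hy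
  | x :: r, cs, y, hy => by
    by_cases hx : x = t
    · subst hx
      cases cs with
      | nil => rw [ins_nil_cs] at hy; exact Or.inl hy
      | cons c cs' =>
        rw [ins_cons_t] at hy
        rcases hy with _ | ⟨_, hy⟩
        · tauto
        · rcases List.mem_append.1 hy with hy | hy
          · exact Or.inr (mem_spike hy)
          · rcases ins_mem x r cs' y hy with h | h
            · exact Or.inl (List.mem_cons_of_mem _ h)
            · tauto
    · rw [ins_cons_ne t cs hx] at hy
      rcases hy with _ | ⟨_, hy⟩
      · exact Or.inl List.mem_cons_self
      · rcases ins_mem t r cs y hy with h | h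
        · exact Or.inl (List.mem_cons_of_mem _ h)
        · tauto

lemma getLast?_cons_ne_nil {x : ℕ} {L : List ℕ} (hL : L ≠ []) :
    (x :: L).getLast? = L.getLast? := by
  cases L with
  | nil => exact absurd rfl hL
  | cons a l => exact List.getLast?_cons_cons

lemma ins_getLast? (t : ℕ) : ∀ (h cs : List ℕ), h ≠ [] →
    (ins t cs h).getLast? = h.getLast?
  | [], _, hne => absurd rfl hne
  | x :: r, cs, _ => by
    by_cases hx : x = t
    · subst hx
      cases cs with
      | nil => rw [ins_nil_cs]
      | cons c cs' =>
        rw [ins_cons_t, spike_getLast]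
        cases hr : r with
        | nil => rw [ins_nil]
        | cons z r' =>
          rw [← hr]
          have hrne : r ≠ [] := by rw [hr]; simp
          rw [getLast?_cons_ne_nil (ins_ne_nil x cs' hrne),
            getLast?_cons_ne_nil hrne, ins_getLast? x r cs' hrne]
    · rw [ins_cons_ne t cs hx]
      cases hr : r with
      | nil => rw [ins_nil]
      | cons z r' =>
        rw [← hr]
        have hrne : r ≠ [] := by rw [hr]; simp
        rw [getLast?_cons_ne_nil (ins_ne_nil t cs hrne),
          getLast?_cons_ne_nil hrne, ins_getLast? t r cs hrne]

lemma ins_ec (t v : ℕ) : ∀ (h cs : List ℕ), h.count t = cs.length →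
    ec v (ins t cs h) = ec v h + (if v = t then 2 * cs.sum else 0)
  | [], cs, hcnt => by
    have : cs = [] := by simpa using (List.length_eq_zero_iff.1 hcnt.symm)
    subst this
    simp [ins_nil, ec_nil]
  | x :: r, cs, hcnt => by
    by_cases hx : x = t
    · subst hx
      cases cs with
      | nil => simp at hcnt
      | cons c cs' =>
        have hcnt' : r.count x = cs'.length := by
          simp [List.count_cons] at hcnt
          omega
        rw [ins_cons_t, ec_spike, ec_cons, ins_head?, ec_cons v x r,
          ins_ec x v r cs' hcnt']
        by_cases hv : v = x <;> simp [hv, List.sum_cons] <;> omega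
    · have hcnt' : r.count t = cs.length := by
        simp [List.count_cons, hx, Ne.symm hx] at hcnt
        omega
      rw [ins_cons_ne t cs hx, ec_cons, ins_head?, ec_cons v x r,
        ins_ec t v r cs hcnt']
      omega

lemma rem_cons_ne (t : ℕ) {x : ℕ} (hx : x ≠ t + 1) (L : List ℕ) :
    rem t (x :: L) = x :: rem t L := by
  cases L <;> simp [rem, hx]

lemma rem_id (t : ℕ) : ∀ h : List ℕ, (∀ x ∈ h, x ≠ t + 1) → rem t h = h
  | [], _ => rfl
  | x :: r, hno => by
    rw [rem_cons_ne t (hno x (by simp)), rem_id t r (fun y hy => hno y (by simp [hy]))]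

lemma rem_spike (t c : ℕ) : ∀ W : List ℕ, rem t (spike t c ++ W) = rem t W := by
  induction c with
  | zero => intro W; simp [spike]
  | succ c ih =>
    intro W
    show rem t ((t+1) :: t :: (spike t c ++ W)) = _
    rw [rem, if_pos rfl, ih]

lemma rem_ins (t : ℕ) : ∀ (h cs : List ℕ), (∀ x ∈ h, x ≠ t + 1) →
    rem t (ins t cs h) = h
  | [], cs, _ => by rw [ins_nil]; rfl
  | x :: r, cs, hno => by
    have hx1 : x ≠ t + 1 := hno x (by simp)
    have hno' : ∀ y ∈ r, y ≠ t + 1 := fun y hy => hno y (by simp [hy])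
    by_cases hx : x = t
    · subst hx
      cases cs with
      | nil => rw [ins_nil_cs]; exact rem_id x _ hno
      | cons c cs' =>
        rw [ins_cons_t, rem_cons_ne x hx1, rem_spike, rem_ins x r cs' hno']
    · rw [ins_cons_ne t cs hx, rem_cons_ne t hx1, rem_ins t r cs hno']

lemma cnts_cons_ne (t : ℕ) {x : ℕ} (hx : x ≠ t) (L : List ℕ) :
    cnts t (x :: L) = cnts t L := by
  cases L <;> simp [cnts, hx]

lemma cnts_cons_t (t : ℕ) (L : List ℕ) (hL : L.head? ≠ some (t + 1)) :
    cnts t (t :: L) = 0 :: cnts t L := by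
  cases L with
  | nil => simp [cnts]
  | cons y r =>
    have hy : y ≠ t + 1 := by simpa using hL
    simp [cnts, hy]

lemma modifyHead_modifyHead (L : List ℕ) (f g : ℕ → ℕ) :
    (L.modifyHead f).modifyHead g = L.modifyHead (fun x => g (f x)) := by
  cases L <;> simp

lemma modifyHead_zero (L : List ℕ) : L.modifyHead (· + 0) = L := by cases L <;> simp

lemma cnts_spike (t c : ℕ) (W : List ℕ) :
    cnts t (t :: (spike t c ++ W)) = (cnts t (t :: W)).modifyHead (· + c) := by
  induction c with
  | zero =>
    rw [show spike t 0 = [] from rfl, List.nil_append, modifyHead_zero]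
  | succ c ih =>
    show cnts t (t :: (t+1) :: t :: (spike t c ++ W)) = _
    rw [cnts, if_pos rfl, if_pos rfl, ih, modifyHead_modifyHead]
    rfl

lemma cnts_ins (t : ℕ) : ∀ (h cs : List ℕ), (∀ x ∈ h, x ≠ t + 1) →
    h.count t = cs.length → cnts t (ins t cs h) = cs
  | [], cs, _, hcnt => by
    have : cs = [] := by simpa using (List.length_eq_zero_iff.1 hcnt.symm)
    subst this
    rw [ins_nil]; rfl
  | x :: r, cs, hno, hcnt => by
    have hno' : ∀ y ∈ r, y ≠ t + 1 := fun y hy => hno y (by simp [hy])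
    by_cases hx : x = t
    · subst hx
      cases cs with
      | nil => simp at hcnt
      | cons c cs' =>
        have hcnt' : r.count x = cs'.length := by
          simp [List.count_cons] at hcnt
          omega
        have hhead : (ins x cs' r).head? ≠ some (x + 1) := by
          rw [ins_head?]
          cases r with
          | nil => simp
          | cons z r' =>
            have : z ≠ x + 1 := hno' z (by simp)
            simpa using this
        rw [ins_cons_t, cnts_spike, cnts_cons_t x _ hhead,
          cnts_ins x r cs' hno' hcnt']
        simp
    · have hcnt' : r.count t = cs.length := by
        simp [List.count_cons, hx, Ne.symm hx] at hcnt
        omega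
      rw [ins_cons_ne t cs hx, cnts_cons_ne t hx, cnts_ins t r cs hno' hcnt']

lemma ec_cons_cons (v x y : ℕ) (r : List ℕ) :
    ec v (x :: y :: r) = (if cross v x y then 1 else 0) + ec v (y :: r) := rfl

def Good (t : ℕ) (h : List ℕ) : Prop :=
  h.Chain' Stp ∧ (∀ x ∈ h, x ≤ t + 1) ∧ h.head? ≠ some (t + 1) ∧ h.getLast? ≠ some (t + 1)

lemma goodCases {t : ℕ} {h : List ℕ} (hg : Good t h) :
    h = [] ∨ (∃ x, h = [x] ∧ x ≠ t + 1) ∨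
    (∃ x y r, h = x :: y :: r ∧ x ≠ t + 1 ∧ y ≠ t + 1 ∧ Good t (y :: r)) ∨
    (∃ r', h = t :: (t + 1) :: t :: r' ∧ Good t (t :: r')) := by
  obtain ⟨hc, hb, hh, hl⟩ := hg
  match h with
  | [] => exact Or.inl rfl
  | [x] =>
    refine Or.inr (Or.inl ⟨x, rfl, ?_⟩)
    simpa using hh
  | x :: y :: r =>
    have hx : x ≠ t + 1 := by simpa using hh
    have hchain := List.isChain_cons_cons.1 hc
    by_cases hy : y = t + 1
    · subst hy
      have hxt : x = t := by
        have h1 := hchain.1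
        have h2 := hb x (by simp)
        unfold Stp at h1; omega
      subst hxt
      match r, hl with
      | [], hl => simp at hl
      | z :: r'', hl =>
        have hz : z = x := by
          have h1 := (List.isChain_cons_cons.1 hchain.2).1
          have h2 := hb z (by simp)
          unfold Stp at h1; omega
        subst hz
        refine Or.inr (Or.inr (Or.inr ⟨r'', rfl, ?_, ?_, ?_, ?_⟩))
        · exact (List.isChain_cons_cons.1 hchain.2).2
        · intro w hw
          apply hb
          simp only [List.mem_cons] at hw ⊢; tauto
        · simp
        · rwa [getLast?_cons_ne_nil (by simp), getLast?_cons_ne_nil (by simp)] at hl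
    · refine Or.inr (Or.inr (Or.inl ⟨x, y, r, rfl, hx, hy, hchain.2, ?_, by simpa using hy, ?_⟩))
      · intro w hw
        apply hb
        simp only [List.mem_cons] at hw ⊢; tauto
      · rwa [getLast?_cons_ne_nil (by simp)] at hl

lemma rem_two (t x y : ℕ) (r : List ℕ) :
    rem t (x :: y :: r) = if x = t + 1 then rem t r else x :: rem t (y :: r) := by
  rw [rem]

lemma rem_spike_case (t : ℕ) (r' : List ℕ) :
    rem t (t :: (t + 1) :: t :: r') = rem t (t :: r') := by
  rw [rem_two, if_neg (show ¬(t = t + 1) by omega), rem_two, if_pos rfl,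
    rem_cons_ne t (show (t : ℕ) ≠ t + 1 by omega) r']

lemma rem_good (t : ℕ) : ∀ (n : ℕ) (h : List ℕ), h.length ≤ n → Good t h →
    List.Chain' Stp (rem t h) ∧ (rem t h).head? = h.head? := by
  intro n
  induction n using Nat.strong_induction_on with
  | _ n ih =>
  intro h hlen hg
  rcases goodCases hg with rfl | ⟨x, rfl, hx⟩ | ⟨x, y, r, rfl, hx, hy, hg'⟩ | ⟨r', rfl, hg'⟩
  · exact ⟨List.isChain_nil, rfl⟩
  · rw [rem_cons_ne t hx]
    exact ⟨List.isChain_singleton x, rfl⟩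
  · simp only [List.length_cons] at hlen
    have hIH := ih (n - 1) (by omega) (y :: r) (by simp; omega) hg'
    rw [rem_cons_ne t hx]
    constructor
    · unfold List.Chain'; rw [List.isChain_cons]
      refine ⟨?_, hIH.1⟩
      intro z hz
      rw [hIH.2] at hz
      obtain rfl : y = z := by simpa using hz
      exact (List.isChain_cons_cons.1 hg.1).1
    · rfl
  · simp only [List.length_cons] at hlen
    have hIH := ih (n - 2) (by omega) (t :: r') (by simp; omega) hg'
    rw [rem_spike_case]
    refine ⟨hIH.1, hIH.2⟩

lemma rem_sub (t : ℕ) : ∀ (n : ℕ) (h : List ℕ), h.length ≤ n → Good t h →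
    ∀ z ∈ rem t h, z ∈ h ∧ z ≠ t + 1 := by
  intro n
  induction n using Nat.strong_induction_on with
  | _ n ih =>
  intro h hlen hg z hz
  rcases goodCases hg with rfl | ⟨x, rfl, hx⟩ | ⟨x, y, r, rfl, hx, hy, hg'⟩ | ⟨r', rfl, hg'⟩
  · simp [rem] at hz
  · rw [rem_cons_ne t hx] at hz
    simp [rem] at hz
    subst hz
    exact ⟨by simp, hx⟩
  · simp only [List.length_cons] at hlen
    rw [rem_cons_ne t hx] at hz
    rcases List.mem_cons.1 hz with rfl | hz
    · exact ⟨by simp, hx⟩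
    · have := ih (n - 1) (by omega) (y :: r) (by simp; omega) hg' z hz
      exact ⟨by simp only [List.mem_cons] at this ⊢; tauto, this.2⟩
  · simp only [List.length_cons] at hlen
    rw [rem_spike_case] at hz
    have := ih (n - 2) (by omega) (t :: r') (by simp; omega) hg' z hz
    exact ⟨by simp only [List.mem_cons] at this ⊢; tauto, this.2⟩

lemma rem_last (t : ℕ) : ∀ (n : ℕ) (h : List ℕ), h.length ≤ n → Good t h →
    (rem t h).getLast? = h.getLast? := by
  intro n
  induction n using Nat.strong_induction_on with
  | _ n ih =>
  intro h hlen hg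
  rcases goodCases hg with rfl | ⟨x, rfl, hx⟩ | ⟨x, y, r, rfl, hx, hy, hg'⟩ | ⟨r', rfl, hg'⟩
  · rfl
  · rw [rem_cons_ne t hx]
    simp [rem]
  · simp only [List.length_cons] at hlen
    have hne : rem t (y :: r) ≠ [] := by
      have := (rem_good t (n - 1) (y :: r) (by simp; omega) hg').2
      intro hcon
      rw [hcon] at this
      simp at this
    rw [rem_cons_ne t hx, getLast?_cons_ne_nil hne,
      ih (n - 1) (by omega) (y :: r) (by simp; omega) hg']
    exact (getLast?_cons_ne_nil (by simp)).symm
  · simp only [List.length_cons] at hlen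
    rw [rem_spike_case, ih (n - 2) (by omega) (t :: r') (by simp; omega) hg']
    rw [show ((t : ℕ) :: (t + 1) :: t :: r').getLast? = (t :: r').getLast? from by
      rw [List.getLast?_cons_cons, List.getLast?_cons_cons]]

lemma rem_ec (t : ℕ) : ∀ (n : ℕ) (h : List ℕ), h.length ≤ n → Good t h → ∀ v,
    ec v h = ec v (rem t h) + (if v = t then 2 * h.count (t + 1) else 0) := by
  intro n
  induction n using Nat.strong_induction_on with
  | _ n ih =>
  intro h hlen hg v
  rcases goodCases hg with rfl | ⟨x, rfl, hx⟩ | ⟨x, y, r, rfl, hx, hy, hg'⟩ | ⟨r', rfl, hg'⟩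
  · simp [rem, ec_nil]
  · rw [rem_cons_ne t hx]
    simp [rem, ec_single, List.count_cons, hx]
  · simp only [List.length_cons] at hlen
    have hIH := ih (n - 1) (by omega) (y :: r) (by simp; omega) hg' v
    have hhead := (rem_good t (n - 1) (y :: r) (by simp; omega) hg').2
    rw [rem_cons_ne t hx, ec_cons_cons, ec_cons v x (rem t (y :: r)), hhead]
    have hcnt : (x :: y :: r).count (t + 1) = (y :: r).count (t + 1) := by
      simp [List.count_cons, hx, Ne.symm hx]
    rw [hcnt]
    simp only [List.head?_cons, Option.elim_some]
    by_cases hv : v = t <;> simp [hv] at hIH ⊢ <;> omega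
  · simp only [List.length_cons] at hlen
    have hIH := ih (n - 2) (by omega) (t :: r') (by simp; omega) hg' v
    rw [rem_spike_case, ec_cons_cons, ec_cons_cons]
    have hcnt : (t :: (t + 1) :: t :: r').count (t + 1) = 1 + (t :: r').count (t + 1) := by
      simp [List.count_cons]
      omega
    rw [hcnt]
    simp only [cross_up, cross_down]
    by_cases hv : v = t <;> simp [hv] at hIH ⊢ <;> omega

lemma cnts_two (t x y : ℕ) (r : List ℕ) :
    cnts t (x :: y :: r) = if x = t then
      (if y = t + 1 then (cnts t r).modifyHead (· + 1) else 0 :: cnts t (y :: r))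
    else cnts t (y :: r) := by
  rw [cnts]

lemma cnts_ne_nil (t : ℕ) : ∀ (n : ℕ) (h : List ℕ), h.length ≤ n → Good t h →
    h.head? = some t → cnts t h ≠ [] := by
  intro n
  induction n using Nat.strong_induction_on with
  | _ n ih =>
  intro h hlen hg hht
  rcases goodCases hg with rfl | ⟨x, rfl, hx⟩ | ⟨x, y, r, rfl, hx, hy, hg'⟩ | ⟨r', rfl, hg'⟩
  · simp at hht
  · obtain rfl : x = t := by simpa using hht
    simp [cnts]
  · obtain rfl : x = t := by simpa using hht
    rw [cnts_two, if_pos rfl, if_neg hy]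
    simp
  · simp only [List.length_cons] at hlen
    rw [cnts_two, if_pos rfl, if_pos rfl]
    have := ih (n - 2) (by omega) (t :: r') (by simp; omega) hg' (by simp)
    intro hcon
    apply this
    cases hc : cnts t (t :: r')
    · rfl
    · rw [hc] at hcon; simp at hcon

lemma cnts_sum (t : ℕ) : ∀ (n : ℕ) (h : List ℕ), h.length ≤ n → Good t h →
    (cnts t h).sum = h.count (t + 1) := by
  intro n
  induction n using Nat.strong_induction_on with
  | _ n ih =>
  intro h hlen hg
  rcases goodCases hg with rfl | ⟨x, rfl, hx⟩ | ⟨x, y, r, rfl, hx, hy, hg'⟩ | ⟨r', rfl, hg'⟩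
  · rfl
  · by_cases hxt : x = t <;> simp [cnts, hxt, List.count_cons, hx]
  · simp only [List.length_cons] at hlen
    have hIH := ih (n - 1) (by omega) (y :: r) (by simp; omega) hg'
    have hcnt : (x :: y :: r).count (t + 1) = (y :: r).count (t + 1) := by
      simp [List.count_cons, hx, Ne.symm hx]
    by_cases hxt : x = t
    · rw [cnts_two, if_pos hxt, if_neg hy, hcnt, ← hIH]
      simp
    · rw [cnts_two, if_neg hxt, hcnt, hIH]
  · simp only [List.length_cons] at hlen
    have hIH := ih (n - 2) (by omega) (t :: r') (by simp; omega) hg'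
    obtain ⟨c, cs, hc⟩ : ∃ c cs, cnts t (t :: r') = c :: cs := by
      have := cnts_ne_nil t (n - 2) (t :: r') (by simp; omega) hg' (by simp)
      exact List.exists_cons_of_ne_nil this
    rw [cnts_two, if_pos rfl, if_pos rfl, hc]
    rw [hc] at hIH
    have hcnt : (t :: (t + 1) :: t :: r').count (t + 1) = 1 + (t :: r').count (t + 1) := by
      simp [List.count_cons]
      omega
    rw [hcnt, ← hIH]
    simp [List.sum_cons]
    omega

lemma cnts_len (t : ℕ) : ∀ (n : ℕ) (h : List ℕ), h.length ≤ n → Good t h →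
    (cnts t h).length = (rem t h).count t := by
  intro n
  induction n using Nat.strong_induction_on with
  | _ n ih =>
  intro h hlen hg
  rcases goodCases hg with rfl | ⟨x, rfl, hx⟩ | ⟨x, y, r, rfl, hx, hy, hg'⟩ | ⟨r', rfl, hg'⟩
  · rfl
  · rw [rem_cons_ne t hx]
    by_cases hxt : x = t <;> simp [cnts, hxt, rem, List.count_cons]
  · simp only [List.length_cons] at hlen
    have hIH := ih (n - 1) (by omega) (y :: r) (by simp; omega) hg'
    rw [rem_cons_ne t hx]
    by_cases hxt : x = t
    · rw [cnts_two, if_pos hxt, if_neg hy]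
      simp only [List.length_cons, hIH, List.count_cons]
      simp [hxt]
    · rw [cnts_two, if_neg hxt, hIH, List.count_cons]
      simp [hxt]
  · simp only [List.length_cons] at hlen
    have hIH := ih (n - 2) (by omega) (t :: r') (by simp; omega) hg'
    rw [cnts_two, if_pos rfl, if_pos rfl, rem_spike_case, ← hIH]
    cases cnts t (t :: r') <;> simp

lemma ins_rem_good (t : ℕ) : ∀ (n : ℕ) (h : List ℕ), h.length ≤ n → Good t h →
    ins t (cnts t h) (rem t h) = h := by
  intro n
  induction n using Nat.strong_induction_on with
  | _ n ih =>
  intro h hlen hg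
  rcases goodCases hg with rfl | ⟨x, rfl, hx⟩ | ⟨x, y, r, rfl, hx, hy, hg'⟩ | ⟨r', rfl, hg'⟩
  · rfl
  · rw [rem_cons_ne t hx]
    by_cases hxt : x = t
    · subst hxt
      simp [cnts, rem, ins, spike]
    · simp [cnts, hxt, rem, ins_nil_cs]
  · simp only [List.length_cons] at hlen
    have hIH := ih (n - 1) (by omega) (y :: r) (by simp; omega) hg'
    rw [rem_cons_ne t hx]
    by_cases hxt : x = t
    · subst hxt
      rw [cnts_two, if_pos rfl, if_neg hy, ins_cons_t, hIH]
      simp [spike]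
    · rw [cnts_two, if_neg hxt, ins_cons_ne t _ hxt, hIH]
  · simp only [List.length_cons] at hlen
    have hIH := ih (n - 2) (by omega) (t :: r') (by simp; omega) hg'
    obtain ⟨c, cs, hc⟩ : ∃ c cs, cnts t (t :: r') = c :: cs := by
      have := cnts_ne_nil t (n - 2) (t :: r') (by simp; omega) hg' (by simp)
      exact List.exists_cons_of_ne_nil this
    have hrem : rem t (t :: r') = t :: rem t r' :=
      rem_cons_ne t (show (t : ℕ) ≠ t + 1 by omega) r'
    rw [hc, hrem, ins_cons_t] at hIH
    have heq : spike t c ++ ins t cs (rem t r') = r' := by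
      injection hIH
    rw [cnts_two, if_pos rfl, if_pos rfl, hc, rem_spike_case, hrem]
    show ins t ((c + 1) :: cs) (t :: rem t r') = _
    rw [ins_cons_t]
    show t :: ((t + 1) :: t :: spike t c ++ ins t cs (rem t r')) = _
    simp only [List.cons_append, heq]

lemma count_eq (u : ℕ) : ∀ (n : ℕ) (h : List ℕ), h.length ≤ n → Good u h →
    ec u h = 2 * h.count (u + 1) := by
  intro n
  induction n using Nat.strong_induction_on with
  | _ n ih =>
  intro h hlen hg
  rcases goodCases hg with rfl | ⟨x, rfl, hx⟩ | ⟨x, y, r, rfl, hx, hy, hg'⟩ | ⟨r', rfl, hg'⟩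
  · rfl
  · simp [ec_single, List.count_cons, hx]
  · simp only [List.length_cons] at hlen
    have hIH := ih (n - 1) (by omega) (y :: r) (by simp; omega) hg'
    rw [ec_cons_cons, hIH]
    have hcr : ¬ cross u x y := by unfold cross; omega
    have hcnt : (x :: y :: r).count (u + 1) = (y :: r).count (u + 1) := by
      simp [List.count_cons, hx, Ne.symm hx]
    rw [if_neg hcr, hcnt]
    omega
  · simp only [List.length_cons] at hlen
    have hIH := ih (n - 2) (by omega) (u :: r') (by simp; omega) hg'
    rw [ec_cons_cons, ec_cons_cons, hIH]
    have hcnt : (u :: (u + 1) :: u :: r').count (u + 1) = 1 + (u :: r').count (u + 1) := by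
      simp [List.count_cons]
      omega
    rw [hcnt]
    simp only [cross_up, cross_down, if_pos rfl]
    have : (u :: r').count (u + 1) = r'.count (u + 1) := by
      simp [List.count_cons]
    simp only [if_pos trivial]
    omega




lemma entry_le_sum {l : List ℕ} {x : ℕ} (hx : x ∈ l) : x ≤ l.sum := by
  induction l with
  | nil => simp at hx
  | cons y r ih =>
    rcases List.mem_cons.1 hx with h | h
    · simp [h, List.sum_cons]
    · simp only [List.sum_cons]; exact le_add_left (ih h)

instance finW (b a : ℕ) : Finite {cs : List ℕ // cs.length = b ∧ cs.sum = a} := by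
  refine Finite.of_injective (β := Fin b → Fin (a + 1))
    (fun x i => ⟨x.1.getD i 0, ?_⟩) ?_
  · have hi : (i : ℕ) < x.1.length := by rw [x.2.1]; exact i.2
    rw [List.getD_eq_getElem _ _ hi]
    have := entry_le_sum (x.1.getElem_mem hi)
    have h2 := x.2.2
    omega
  · rintro ⟨l1, hl1, hs1⟩ ⟨l2, hl2, hs2⟩ h
    ext1
    apply List.ext_getElem (by rw [hl1, hl2])
    intro i h1 h2
    have h3 : l1.getD i 0 = l2.getD i 0 :=
      congrArg Fin.val (congrFun h ⟨i, by rwa [hl1] at h1⟩)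
    rwa [List.getD_eq_getElem _ _ h1, List.getD_eq_getElem _ _ h2] at h3

def wSplit (b a : ℕ) : {cs : List ℕ // cs.length = b + 1 ∧ cs.sum = a + 1} ≃
    {cs : List ℕ // cs.length = b ∧ cs.sum = a + 1} ⊕
      {cs : List ℕ // cs.length = b + 1 ∧ cs.sum = a} where
  toFun := fun ⟨cs, hp⟩ =>
    match cs, hp with
    | c :: r, hp =>
      if hc : c = 0 then Sum.inl ⟨r, by simp_all⟩
      else Sum.inr ⟨(c - 1) :: r, by
        obtain ⟨h1, h2⟩ := hp
        simp only [List.length_cons, Nat.succ.injEq] at h1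
        simp only [List.sum_cons] at h2
        constructor
        · simp [h1]
        · simp only [List.sum_cons]; omega⟩
  invFun := fun x =>
    match x with
    | Sum.inl ⟨r, hp⟩ => ⟨0 :: r, by simp [hp.1, hp.2]⟩
    | Sum.inr ⟨cs, hp⟩ =>
      match cs, hp with
      | c :: r, hp => ⟨(c + 1) :: r, by
          obtain ⟨h1, h2⟩ := hp
          simp only [List.length_cons, Nat.succ.injEq] at h1
          simp only [List.sum_cons] at h2
          constructor
          · simp [h1]
          · simp only [List.sum_cons]; omega⟩
  left_inv := by
    rintro ⟨cs, hp⟩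
    match cs, hp with
    | c :: r, hp =>
      by_cases hc : c = 0 <;> simp [hc]
      · omega
  right_inv := by
    rintro (⟨r, hp⟩ | ⟨cs, hp⟩)
    · simp
    · match cs, hp with
      | c :: r, hp => simp

lemma wCard : ∀ b a : ℕ, Nat.card {cs : List ℕ // cs.length = b ∧ cs.sum = a}
    = (b + a - 1).choose a
  | b, 0 => by
    have : Nonempty {cs : List ℕ // cs.length = b ∧ cs.sum = 0} :=
      ⟨⟨List.replicate b 0, by simp⟩⟩
    have hsub : Subsingleton {cs : List ℕ // cs.length = b ∧ cs.sum = 0} := by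
      constructor
      rintro ⟨l1, h1, s1⟩ ⟨l2, h2, s2⟩
      have rep : ∀ l : List ℕ, l.sum = 0 → l = List.replicate l.length 0 := by
        intro l hl
        apply List.eq_replicate_length.2
        intro x hx
        have := entry_le_sum hx
        omega
      have : l1 = l2 := by rw [rep l1 s1, rep l2 s2, h1, h2]
      exact Subtype.ext this
    simp [Nat.card_unique]
  | 0, a + 1 => by
    have : IsEmpty {cs : List ℕ // cs.length = 0 ∧ cs.sum = a + 1} := by
      constructor; rintro ⟨l, hl, hs⟩
      rw [List.length_eq_zero_iff] at hl
      simp [hl] at hs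
    rw [Nat.card_of_isEmpty]; simp
  | b + 1, a + 1 => by
    rw [Nat.card_congr (wSplit b a), Nat.card_sum, wCard b (a + 1), wCard (b + 1) a]
    have h1 : b + 1 + (a + 1) - 1 = (b + a) + 1 := by omega
    have h2 : b + (a + 1) - 1 = b + a := by omega
    have h3 : b + 1 + a - 1 = b + a := by omega
    rw [h1, h2, h3, Nat.choose_succ_succ (b + a) a]
    exact Nat.add_comm _ _












-- base case
def alt : ℕ → List ℕ
  | 0 => [1]
  | a + 1 => 1 :: 2 :: alt a

lemma alt_head (a : ℕ) : (alt a).head? = some 1 := by cases a <;> rfl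

lemma alt_last (a : ℕ) : (alt a).getLast? = some 1 := by
  induction a with
  | zero => rfl
  | succ a ih =>
    obtain ⟨tl, htl⟩ : ∃ tl, alt a = 1 :: tl := by cases a <;> exact ⟨_, rfl⟩
    show (1 :: 2 :: alt a).getLast? = some 1
    rw [htl, List.getLast?_cons_cons, List.getLast?_cons_cons, ← htl]
    exact ih

lemma alt_chain (a : ℕ) : (alt a).Chain' Stp := by
  induction a with
  | zero => exact List.isChain_singleton 1
  | succ a ih =>
    show List.Chain' Stp (1 :: 2 :: alt a)
    unfold List.Chain'; rw [List.isChain_cons_cons]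
    refine ⟨Or.inl rfl, ?_⟩
    rw [List.isChain_cons]
    refine ⟨?_, ih⟩
    intro y hy
    rw [alt_head] at hy
    cases hy
    exact Or.inr rfl

lemma alt_mem (a : ℕ) : ∀ x ∈ alt a, 1 ≤ x ∧ x ≤ 2 := by
  induction a with
  | zero => intro x hx; simp [alt] at hx; omega
  | succ a ih =>
    intro x hx
    rcases hx with _ | ⟨_, hx⟩
    · omega
    · rcases hx with _ | ⟨_, hx⟩
      · omega
      · exact ih _ hx

lemma cross_one_two (v : ℕ) : cross v 1 2 ↔ v = 1 := by unfold cross; omega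

lemma cross_two_one (v : ℕ) : cross v 2 1 ↔ v = 1 := by unfold cross; omega

lemma ec_alt (v a : ℕ) : ec v (alt a) = if v = 1 then 2 * a else 0 := by
  induction a with
  | zero => simp [alt, ec]
  | succ a ih =>
    obtain ⟨tl, htl⟩ : ∃ tl, alt a = 1 :: tl := by cases a <;> exact ⟨_, rfl⟩
    show ec v (1 :: 2 :: alt a) = _
    rw [htl]
    show (if cross v 1 2 then 1 else 0) + ((if cross v 2 1 then 1 else 0) + ec v (1 :: tl)) = _
    rw [← htl, ih]
    simp only [cross_one_two, cross_two_one]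
    by_cases hv : v = 1 <;> simp [hv] <;> omega

lemma P_alt (a : ℕ) : P [a] (alt a) := by
  refine ⟨alt_chain a, alt_mem a, alt_head a, alt_last a, ?_⟩
  intro i
  rw [ec_alt]
  cases i with
  | zero => simp
  | succ i => simp

lemma base_unique : ∀ (n : ℕ) (h : List ℕ), h.length ≤ n → h.Chain' Stp →
    (∀ x ∈ h, 1 ≤ x ∧ x ≤ 2) → h.head? = some 1 → h.getLast? = some 1 →
    ∀ a, ec 1 h = 2 * a → h = alt a := by
  intro n
  induction n using Nat.strong_induction_on with
  | _ n ih =>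
    intro h hlen hc hb hh hl a hec
    match h, hh with
    | 1 :: rest, _ =>
      match rest, hl with
      | [], _ =>
        have : a = 0 := by simpa [ec] using hec.symm
        simp [this, alt]
      | y :: r, hl =>
        have hy : y = 2 := by
          have h1 := (List.isChain_cons_cons.1 hc).1
          have h2 := hb y (by simp)
          unfold Stp at h1; omega
        subst hy
        match r, hl with
        | [], hl => simp at hl
        | z :: r', hl =>
          have hz : z = 1 := by
            have h1 := (List.isChain_cons_cons.1 (List.isChain_cons_cons.1 hc).2).1
            have h2 := hb z (by simp)
            unfold Stp at h1; omega
          subst hz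
          have hec' : ec 1 (1 :: 2 :: 1 :: r') = 2 + ec 1 (1 :: r') := by
            simp [ec, cross_one_two, cross_two_one]
            omega
          rw [hec'] at hec
          have ha : 1 ≤ a := by omega
          obtain ⟨k, rfl⟩ : ∃ k, a = k + 1 := ⟨a - 1, by omega⟩
          have hrec : ec 1 (1 :: r') = 2 * k := by omega
          have hlen' : (1 :: r').length ≤ n - 2 := by
            simp only [List.length_cons] at hlen ⊢; omega
          have hn : n - 2 < n := by
            simp only [List.length_cons] at hlen; omega
          have := ih (n - 2) hn (1 :: r') hlen'
            (List.isChain_cons_cons.1 (List.isChain_cons_cons.1 hc).2).2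
            (by intro x hx; apply hb x; simp only [List.mem_cons] at hx ⊢; tauto)
            rfl (by simpa using hl) k hrec
          show 1 :: 2 :: (1 :: r') = 1 :: 2 :: alt k
          rw [this]

lemma card_base (a : ℕ) : Nat.card {h : List ℕ // P [a] h} = 1 := by
  have hne : Nonempty {h : List ℕ // P [a] h} := ⟨⟨alt a, P_alt a⟩⟩
  have hss : Subsingleton {h : List ℕ // P [a] h} := by
    constructor
    rintro ⟨h1, hc1, hb1, hh1, hl1, he1⟩ ⟨h2, hc2, hb2, hh2, hl2, he2⟩
    have e1 := base_unique h1.length h1 le_rfl hc1 (by simpa using hb1) hh1 hl1 a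
      (by simpa using he1 0)
    have e2 := base_unique h2.length h2 le_rfl hc2 (by simpa using hb2) hh2 hl2 a
      (by simpa using he2 0)
    exact Subtype.ext (e1.trans e2.symm)
  exact Nat.card_unique

lemma betaComp_append : ∀ (ms : List ℕ) (b a : ℕ), ms.getLast? = some b →
    betaComp (ms ++ [a]) = betaComp ms * (b + a - 1).choose a
  | [], _, _, h => by simp at h
  | [x], b, a, h => by
    have hxb : x = b := by simpa using h
    subst hxb
    show (x + a - 1).choose a * 1 = 1 * (x + a - 1).choose a
    ring
  | x :: y :: l, b, a, h => by
    have h' : (y :: l).getLast? = some b := by rwa [List.getLast?_cons_cons] at h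
    show betaComp (x :: y :: (l ++ [a])) = betaComp (x :: y :: l) * (b + a - 1).choose a
    show (x + y - 1).choose y * betaComp (y :: (l ++ [a])) = _
    have : betaComp (y :: (l ++ [a])) = betaComp (y :: l) * (b + a - 1).choose a :=
      betaComp_append (y :: l) b a h'
    rw [this]
    show _ = (x + y - 1).choose y * betaComp (y :: l) * _
    ring


lemma getD_ge : ∀ (l : List ℕ) (i : ℕ), l.length ≤ i → l.getD i 0 = 0
  | [], i, _ => by simp
  | x :: r, i, hi => by
    cases i with
    | zero => simp at hi
    | succ i => simp only [List.getD_cons_succ]; exact getD_ge r i (by simpa using hi)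

lemma getD_append_lt : ∀ (l l' : List ℕ) (i : ℕ), i < l.length →
    (l ++ l').getD i 0 = l.getD i 0
  | [], _, i, hi => by simp at hi
  | x :: r, l', 0, _ => rfl
  | x :: r, l', i + 1, hi => by
    simp only [List.cons_append, List.getD_cons_succ]
    exact getD_append_lt r l' i (by simpa using hi)

lemma getD_append_len : ∀ (l : List ℕ) (a : ℕ), (l ++ [a]).getD l.length 0 = a
  | [], a => rfl
  | x :: r, a => by
    simp only [List.cons_append, List.length_cons, List.getD_cons_succ]
    exact getD_append_len r a

lemma getLast?_getD : ∀ (l : List ℕ) (b : ℕ), l.getLast? = some b →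
    l.getD (l.length - 1) 0 = b
  | [], b, hb => by simp at hb
  | [x], b, hb => by simpa using hb
  | x :: y :: r, b, hb => by
    rw [List.getLast?_cons_cons] at hb
    have := getLast?_getD (y :: r) b hb
    simpa using this

lemma P_good_top {ms : List ℕ} {a : ℕ} {h : List ℕ} (pp : P (ms ++ [a]) h) :
    Good (ms.length + 1) h := by
  obtain ⟨hc, hb, hh, hl, he⟩ := pp
  refine ⟨hc, fun x hx => ?_, ?_, ?_⟩
  · have := (hb x hx).2
    simp only [List.length_append, List.length_singleton] at this
    omega
  · rw [hh]; simp
  · rw [hl]; simp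

lemma P_good_self {ms : List ℕ} {h : List ℕ} (hL : 1 ≤ ms.length) (pp : P ms h) :
    Good ms.length h := by
  obtain ⟨hc, hb, hh, hl, he⟩ := pp
  refine ⟨hc, fun x hx => (hb x hx).2, ?_, ?_⟩
  · rw [hh]; intro hcon; have := Option.some.inj hcon; omega
  · rw [hl]; intro hcon; have := Option.some.inj hcon; omega

lemma P_count_last {ms : List ℕ} {h : List ℕ} (hL : 1 ≤ ms.length) (pp : P ms h) :
    h.count (ms.length + 1) = ms.getD (ms.length - 1) 0 := by
  have hcnt := count_eq ms.length h.length h le_rfl (P_good_self hL pp)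
  have he := pp.2.2.2.2 (ms.length - 1)
  rw [show ms.length - 1 + 1 = ms.length by omega] at he
  omega

lemma P_count_top {ms : List ℕ} {a : ℕ} {h : List ℕ} (pp : P (ms ++ [a]) h) :
    h.count (ms.length + 2) = a := by
  have hgood := P_good_top pp
  have hcnt := count_eq (ms.length + 1) h.length h le_rfl hgood
  have he := pp.2.2.2.2 ms.length
  rw [getD_append_len] at he
  rw [show ms.length + 2 = ms.length + 1 + 1 by omega]
  omega

lemma P_of_rem {ms : List ℕ} {a : ℕ} {h : List ℕ} (hL : 1 ≤ ms.length)
    (pp : P (ms ++ [a]) h) : P ms (rem (ms.length + 1) h) := by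
  set t := ms.length + 1 with ht
  have hgood := P_good_top pp
  obtain ⟨hc, hb, hh, hl, he⟩ := pp
  refine ⟨(rem_good t h.length h le_rfl hgood).1, ?_, ?_, ?_, ?_⟩
  · intro x hx
    have hs := rem_sub t h.length h le_rfl hgood x hx
    have := hb x hs.1
    have h2 := hs.2
    simp only [List.length_append, List.length_singleton] at this
    constructor
    · exact this.1
    · omega
  · rw [(rem_good t h.length h le_rfl hgood).2]; exact hh
  · rw [rem_last t h.length h le_rfl hgood]; exact hl
  · intro i
    have hecv := rem_ec t h.length h le_rfl hgood (i + 1)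
    have htop : h.count (t + 1) = a := P_count_top ⟨hc, hb, hh, hl, he⟩
    have hei := he i
    by_cases hit : i + 1 = t
    · have hia : i = ms.length := by omega
      subst hia
      rw [if_pos hit, htop] at hecv
      rw [getD_append_len] at hei
      rw [getD_ge ms ms.length le_rfl]
      omega
    · rw [if_neg hit] at hecv
      rcases lt_or_ge i ms.length with hi | hi
      · rw [getD_append_lt ms [a] i hi] at hei
        omega
      · rw [getD_ge (ms ++ [a]) i (by simp; omega)] at hei
        rw [getD_ge ms i hi]
        omega

lemma P_of_ins {ms : List ℕ} {a b : ℕ} {h cs : List ℕ} (hL : 1 ≤ ms.length)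
    (hb : ms.getLast? = some b) (ph : P ms h) (hcl : cs.length = b) (hcs : cs.sum = a) :
    P (ms ++ [a]) (ins (ms.length + 1) cs h) := by
  set t := ms.length + 1 with ht
  have hhne : h ≠ [] := by
    intro hcon
    rw [hcon] at ph
    exact (by simpa using ph.2.2.1 : False)
  have hcount : h.count t = cs.length := by
    rw [P_count_last hL ph, getLast?_getD ms b hb, hcl]
  obtain ⟨hc, hbnd, hh, hl, he⟩ := ph
  refine ⟨ins_chain t h cs hc, ?_, ?_, ?_, ?_⟩
  · intro x hx
    rcases ins_mem t h cs x hx with hx' | hx' | hx'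
    · have := hbnd x hx'
      simp only [List.length_append, List.length_singleton]
      omega
    · simp only [List.length_append, List.length_singleton]
      omega
    · simp only [List.length_append, List.length_singleton]
      omega
  · rw [ins_head?]; exact hh
  · rw [ins_getLast? t h cs hhne]; exact hl
  · intro i
    rw [ins_ec t (i + 1) h cs hcount, hcs]
    by_cases hit : i + 1 = t
    · have hia : i = ms.length := by omega
      subst hia
      rw [if_pos hit, getD_append_len, he ms.length, getD_ge ms ms.length le_rfl]
      omega
    · rw [if_neg hit, he i]
      rcases lt_or_ge i ms.length with hi | hi
      · rw [getD_append_lt ms [a] i hi]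
        exact Nat.add_zero _
      · rw [getD_ge (ms ++ [a]) i (by simp; omega), getD_ge ms i hi]

def stepEquiv (ms : List ℕ) (a b : ℕ) (hL : 1 ≤ ms.length) (hb : ms.getLast? = some b) :
    {h : List ℕ // P (ms ++ [a]) h} ≃
      {h : List ℕ // P ms h} × {cs : List ℕ // cs.length = b ∧ cs.sum = a} where
  toFun := fun ⟨h, pp⟩ =>
    (⟨rem (ms.length + 1) h, P_of_rem hL pp⟩,
     ⟨cnts (ms.length + 1) h, by
        have hgood := P_good_top pp
        constructor
        · rw [cnts_len (ms.length + 1) h.length h le_rfl hgood]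
          have := P_count_last hL (P_of_rem hL pp)
          rw [this, getLast?_getD ms b hb]
        · rw [cnts_sum (ms.length + 1) h.length h le_rfl hgood]
          exact P_count_top pp⟩)
  invFun := fun ⟨⟨h, ph⟩, ⟨cs, hcl, hcs⟩⟩ =>
    ⟨ins (ms.length + 1) cs h, P_of_ins hL hb ph hcl hcs⟩
  left_inv := by
    rintro ⟨h, pp⟩
    apply Subtype.ext
    exact ins_rem_good (ms.length + 1) h.length h le_rfl (P_good_top pp)
  right_inv := by
    rintro ⟨⟨h, ph⟩, ⟨cs, hcl, hcs⟩⟩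
    have hno : ∀ x ∈ h, x ≠ ms.length + 1 + 1 := by
      intro x hx
      have := (ph.2.1 x hx).2
      omega
    have hcount : h.count (ms.length + 1) = cs.length := by
      rw [P_count_last hL ph, getLast?_getD ms b hb, hcl]
    refine Prod.ext ?_ ?_
    · apply Subtype.ext
      exact rem_ins (ms.length + 1) h cs hno
    · apply Subtype.ext
      exact cnts_ins (ms.length + 1) h cs hno hcount

lemma listMain : ∀ (ms : List ℕ), ms ≠ [] → Nat.card {h : List ℕ // P ms h} = betaComp ms := by
  intro ms
  induction ms using List.reverseRecOn with
  | nil => intro hcon; exact absurd rfl hcon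
  | append_singleton ms a ih =>
    intro _
    cases ms with
    | nil =>
      rw [List.nil_append]
      rw [card_base a]
      rfl
    | cons m0 ms' =>
      have hne : m0 :: ms' ≠ [] := by simp
      obtain ⟨b, hb⟩ : ∃ b, (m0 :: ms').getLast? = some b := by
        cases hg : (m0 :: ms').getLast? with
        | none => rw [List.getLast?_eq_none_iff] at hg; simp at hg
        | some b => exact ⟨b, rfl⟩
      rw [Nat.card_congr (stepEquiv (m0 :: ms') a b (by simp) hb), Nat.card_prod,
        ih hne, wCard b a, betaComp_append (m0 :: ms') b a hb]

lemma getD_ge' : ∀ (l : List ℕ) (i : ℕ), l.length ≤ i → l.getD i 0 = 0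
  | [], i, _ => by simp
  | x :: r, i, hi => by
    cases i with
    | zero => simp at hi
    | succ i => simp only [List.getD_cons_succ]; exact getD_ge' r i (by simpa using hi)

lemma getLast?_getD' : ∀ (l : List ℕ) (b : ℕ), l.getLast? = some b →
    l.getD (l.length - 1) 0 = b
  | [], b, hb => by simp at hb
  | [x], b, hb => by simpa using hb
  | x :: y :: r, b, hb => by
    rw [List.getLast?_cons_cons] at hb
    have := getLast?_getD' (y :: r) b hb
    simpa using this

-- length of a valid path from its edge counts
lemma sum_getD (l : List ℕ) : ∑ i ∈ Finset.range l.length, l.getD i 0 = l.sum := by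
  induction l with
  | nil => simp
  | cons x r ih =>
    rw [List.length_cons, Finset.sum_range_succ']
    simp only [List.getD_cons_succ, List.getD_cons_zero, List.sum_cons]
    rw [ih]
    omega

lemma len_ec (K : ℕ) : ∀ h : List ℕ, h.Chain' Stp → (∀ x ∈ h, 1 ≤ x ∧ x ≤ K + 1) →
    h ≠ [] → h.length = 1 + ∑ v ∈ Finset.range K, ec (v + 1) h
  | [], _, _, hne => absurd rfl hne
  | [x], _, _, _ => by simp [ec_single]
  | x :: y :: r, hc, hb, _ => by
    have ih := len_ec K (y :: r) (List.isChain_cons_cons.1 hc).2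
      (fun z hz => hb z (List.mem_cons_of_mem _ hz)) (by simp)
    have hx := hb x (by simp)
    have hy := hb y (by simp)
    have hst := (List.isChain_cons_cons.1 hc).1
    have hiff : ∀ v, (if cross (v + 1) x y then (1:ℕ) else 0)
        = if v = min x y - 1 then 1 else 0 := by
      intro v
      refine if_congr ?_ rfl rfl
      unfold cross
      unfold Stp at hst
      omega
    have hone : ∑ v ∈ Finset.range K, (if cross (v + 1) x y then (1:ℕ) else 0) = 1 := by
      rw [Finset.sum_congr rfl (fun v _ => hiff v),
        Finset.sum_ite_eq' (Finset.range K) (min x y - 1) (fun _ => (1:ℕ))]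
      rw [if_pos]
      rw [Finset.mem_range]
      unfold Stp at hst
      omega
    calc (x :: y :: r).length = 1 + (y :: r).length := by simp; omega
      _ = 1 + (1 + ∑ v ∈ Finset.range K, ec (v + 1) (y :: r)) := by rw [ih]
      _ = 1 + ∑ v ∈ Finset.range K, ec (v + 1) (x :: y :: r) := by
          simp only [ec_cons_cons]
          rw [Finset.sum_add_distrib, hone]

lemma P_length {ms h : List ℕ} (pp : P ms h) : h.length = 2 * ms.sum + 1 := by
  obtain ⟨hc, hb, hh, hl, he⟩ := pp
  have hne : h ≠ [] := by intro hcon; rw [hcon] at hh; simp at hh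
  rw [len_ec ms.length h hc hb hne]
  have : ∑ v ∈ Finset.range ms.length, ec (v + 1) h
      = ∑ v ∈ Finset.range ms.length, 2 * ms.getD v 0 :=
    Finset.sum_congr rfl fun v _ => he v
  rw [this, ← Finset.mul_sum, sum_getD]
  omega

lemma ec_map (π : ℕ → ℕ) (v : ℕ) : ∀ (k s : ℕ),
    ec v ((List.range' s (k + 1)).map π) =
      ∑ j ∈ Finset.range k, (if cross v (π (s + j)) (π (s + j + 1)) then 1 else 0)
  | 0, s => by simp [ec_single]
  | k + 1, s => by
    have ih := ec_map π v k (s + 1)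
    rw [List.range'_succ, List.range'_succ, List.map_cons, List.map_cons, ec_cons_cons,
      ← List.map_cons, ← List.range'_succ, ih, Finset.sum_range_succ']
    have h1 : ∑ j ∈ Finset.range k, (if cross v (π (s + 1 + j)) (π (s + 1 + j + 1)) then (1:ℕ) else 0)
        = ∑ j ∈ Finset.range k, (if cross v (π (s + (j + 1))) (π (s + (j + 1) + 1)) then (1:ℕ) else 0) :=
      Finset.sum_congr rfl fun j _ => by rw [show s + 1 + j = s + (j + 1) by omega]
    rw [h1]
    simp only [Nat.add_zero]
    exact Nat.add_comm _ _

lemma edgeCount_eq (N : ℕ) (π : ℕ → ℕ) (v : ℕ) :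
    edgeCount N π v = ec v ((List.range (2 * N + 1)).map π) := by
  rw [List.range_eq_range', ec_map, edgeCount, Finset.card_filter]
  apply Finset.sum_congr rfl
  intro j _
  refine if_congr ?_ rfl rfl
  rw [Nat.zero_add]
  unfold cross
  exact Iff.rfl

lemma map_getD_range (l : List ℕ) : (List.range l.length).map (fun j => l.getD j 0) = l := by
  apply List.ext_getElem (by simp)
  intro i h1 h2
  simp only [List.getElem_map, List.getElem_range]
  rw [List.getD_eq_getElem l 0 h2]

lemma getD_zero_of_head {l : List ℕ} (h : l.head? = some 1) : l.getD 0 0 = 1 := by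
  cases l with
  | nil => simp at h
  | cons x r => simpa using h

def piEquiv (N : ℕ) (ms : List ℕ) (hsum : ms.sum = N) :
    {π : ℕ → ℕ // IsLoop (ms.length + 1) N π ∧ Traverses N ms π ∧ π 0 = 1} ≃
      {h : List ℕ // P ms h} where
  toFun := fun x =>
    ⟨(List.range (2 * N + 1)).map x.1, by
      obtain ⟨π, ⟨hz, hb, hcyc, hstep⟩, htrav, h0⟩ := x
      show P ms ((List.range (2 * N + 1)).map π)
      unfold P
      refine ⟨?_, ?_, ?_, ?_, ?_⟩
      · unfold List.Chain'; rw [List.isChain_map, List.isChain_range_succ]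
        intro j hj
        exact hstep j hj
      · intro x hx
        simp only [List.mem_map, List.mem_range] at hx
        obtain ⟨j, hj, rfl⟩ := hx
        exact hb j (by omega)
      · rw [List.range_succ_eq_map, List.map_cons]
        simpa using h0
      · rw [List.range_succ, List.map_append]
        simp only [List.map_cons, List.map_nil]
        rw [List.getLast?_concat]
        rw [← hcyc, h0]
      · intro i
        rw [← edgeCount_eq]
        rcases lt_or_ge i ms.length with hi | hi
        · have := htrav (i + 1) (by omega) (by omega)
          simpa using this
        · rw [getD_ge' ms i hi]
          rw [edgeCount, Finset.card_filter]
          rw [Finset.sum_eq_zero, Nat.mul_zero]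
          intro j hj
          rw [Finset.mem_range] at hj
          have h1 := hb j (by omega)
          have h2 := hb (j + 1) (by omega)
          rw [if_neg]
          intro hcon
          rcases hcon with ⟨_, h⟩ | ⟨h, _⟩ <;> omega⟩
  invFun := fun x =>
    ⟨fun j => x.1.getD j 0, by
      obtain ⟨h, pp⟩ := x
      show IsLoop (ms.length + 1) N (fun j => h.getD j 0) ∧
        Traverses N ms (fun j => h.getD j 0) ∧ h.getD 0 0 = 1
      have hlen := P_length pp
      obtain ⟨hc, hb, hh, hl, he⟩ := pp
      have hmem : ∀ j, j ≤ 2 * N → 1 ≤ h.getD j 0 ∧ h.getD j 0 ≤ ms.length + 1 := by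
        intro j hj
        have hjl : j < h.length := by omega
        rw [List.getD_eq_getElem h 0 hjl]
        exact hb _ (h.getElem_mem hjl)
      refine ⟨⟨?_, hmem, ?_, ?_⟩, ?_, ?_⟩
      · intro j hj
        exact getD_ge' h j (by omega)
      · show h.getD 0 0 = h.getD (2 * N) 0
        rw [getD_zero_of_head hh]
        have := getLast?_getD' h 1 hl
        rw [hlen, hsum] at this
        simpa using this.symm
      · intro j hj
        have hchain := List.isChain_iff_getElem.1 hc
        have hs := hchain j (by omega)
        have hj1 : j < h.length := by omega
        have hj2 : j + 1 < h.length := by omega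
        show h.getD (j + 1) 0 = h.getD j 0 + 1 ∨ h.getD j 0 = h.getD (j + 1) 0 + 1
        rw [List.getD_eq_getElem h 0 hj1, List.getD_eq_getElem h 0 hj2]
        unfold Stp at hs
        tauto
      · intro v hv1 hv2
        rw [edgeCount_eq]
        have hmap : (List.range (2 * N + 1)).map (fun j => h.getD j 0) = h := by
          have := map_getD_range h
          rwa [hlen, hsum] at this
        rw [hmap]
        have := he (v - 1)
        rwa [show v - 1 + 1 = v by omega] at this
      · exact getD_zero_of_head hh⟩
  left_inv := by
    rintro ⟨π, hloop, htrav, h0⟩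
    apply Subtype.ext
    funext j
    rcases le_or_gt j (2 * N) with hj | hj
    · have hjl : j < (List.range (2 * N + 1)).length := by simp; omega
      show ((List.range (2 * N + 1)).map π).getD j 0 = π j
      rw [List.getD_eq_getElem _ 0 (by simpa using hjl)]
      simp
    · show ((List.range (2 * N + 1)).map π).getD j 0 = π j
      rw [getD_ge' _ j (by simp; omega), hloop.1 j hj]
  right_inv := by
    rintro ⟨h, pp⟩
    apply Subtype.ext
    have hlen := P_length pp
    show (List.range (2 * N + 1)).map (fun j => h.getD j 0) = h
    have := map_getD_range h
    rwa [hlen, hsum] at this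


end DyckCount

/-- For every composition `m = (m₁,…,m_ℓ)` of `N`, the number of Dyck paths of length `2N`
taking exactly `2m_j` steps at level `j` (loops based at `1` in `{1,…,ℓ+1}` traversing
edge `(j,j+1)` exactly `2m_j` times) equals `β(m)`. -/
theorem card_dyck_paths_with_specification (N : ℕ) (hN : 1 ≤ N) (m : Composition N) :
    Nat.card {π : ℕ → ℕ //
        IsLoop (m.length + 1) N π ∧ Traverses N m.blocks π ∧ π 0 = 1}
      = betaComp m.blocks := by
  have hsum : m.blocks.sum = N := m.blocks_sum
  have hlen : m.blocks.length = m.length := m.blocks_length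
  have hne : m.blocks ≠ [] := by
    intro hcon
    rw [hcon] at hsum
    simp at hsum
    omega
  rw [← hlen]
  rw [Nat.card_congr (DyckCount.piEquiv N m.blocks hsum)]
  exact DyckCount.listMain m.blocks hne
end

section
/- For every composition m = (m₁,…,m_ℓ) of N, one has α(m) ≤ (1/N)·N!/(m₁!·m₂!⋯m_ℓ!), with equality if and only if ℓ = 1 or ℓ = 2. -/
def multinomComp (l : List ℕ) : ℚ :=
  (Nat.factorial l.sum : ℚ) / ((l.map Nat.factorial).prod : ℕ)

lemma fact_ratio (t x y : ℕ) (h : x ≤ y) :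
    (x + t).factorial * y.factorial ≤ (y + t).factorial * x.factorial := by
  induction t with
  | zero => simp [Nat.mul_comm]
  | succ t ih =>
    have hx : (x + (t+1)).factorial = (x + t + 1) * (x + t).factorial := by
      rw [← Nat.add_assoc]; rfl
    have hy : (y + (t+1)).factorial = (y + t + 1) * (y + t).factorial := by
      rw [← Nat.add_assoc]; rfl
    calc (x + (t+1)).factorial * y.factorial
        = (x + t + 1) * ((x + t).factorial * y.factorial) := by rw [hx, Nat.mul_assoc]
      _ ≤ (x + t + 1) * ((y + t).factorial * x.factorial) := Nat.mul_le_mul_left _ ih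
      _ ≤ (y + t + 1) * ((y + t).factorial * x.factorial) :=
          Nat.mul_le_mul_right _ (by omega)
      _ = (y + (t+1)).factorial * x.factorial := by rw [hy, Nat.mul_assoc]

lemma fact_ratio_lt (t x y : ℕ) (ht : 1 ≤ t) (h : x < y) :
    (x + t).factorial * y.factorial < (y + t).factorial * x.factorial := by
  obtain ⟨t, rfl⟩ := Nat.exists_eq_add_of_le ht
  have hx : (x + (1 + t)).factorial = (x + t + 1) * (x + t).factorial := by
    rw [show x + (1+t) = x + t + 1 by omega]; rfl
  have hy : (y + (1 + t)).factorial = (y + t + 1) * (y + t).factorial := by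
    rw [show y + (1+t) = y + t + 1 by omega]; rfl
  have h1 := fact_ratio t x y h.le
  have hpos : 0 < (y + t).factorial * x.factorial :=
    Nat.mul_pos (Nat.factorial_pos _) (Nat.factorial_pos _)
  calc (x + (1+t)).factorial * y.factorial
      = (x + t + 1) * ((x + t).factorial * y.factorial) := by rw [hx, Nat.mul_assoc]
    _ ≤ (x + t + 1) * ((y + t).factorial * x.factorial) := Nat.mul_le_mul_left _ h1
    _ < (y + t + 1) * ((y + t).factorial * x.factorial) :=
        Nat.mul_lt_mul_of_lt_of_le (by omega) le_rfl hpos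
    _ = (y + (1+t)).factorial * x.factorial := by rw [hy, Nat.mul_assoc]

lemma two_term (a b : ℕ) (ha : 1 ≤ a) (hb : 1 ≤ b) :
    Nat.choose (a + b - 1) b * (a.factorial * b.factorial)
      = a * (a + b - 1).factorial := by
  have hk : b ≤ a + b - 1 := by omega
  have h1 := Nat.choose_mul_factorial_mul_factorial hk
  have h2 : a + b - 1 - b = a - 1 := by omega
  rw [h2] at h1
  have h3 : a.factorial = a * (a - 1).factorial := (Nat.mul_factorial_pred (by omega : a ≠ 0)).symm
  calc Nat.choose (a + b - 1) b * (a.factorial * b.factorial)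
      = a * (Nat.choose (a + b - 1) b * b.factorial * (a-1).factorial) := by
        rw [h3]; ring
    _ = a * (a + b - 1).factorial := by rw [h1]

lemma key : ∀ (l : List ℕ), (∀ x ∈ l, 1 ≤ x) → l ≠ [] →
    betaComp l * (l.map Nat.factorial).prod ≤ l.headI * (l.sum - 1).factorial ∧
    (betaComp l * (l.map Nat.factorial).prod = l.headI * (l.sum - 1).factorial
      ↔ l.length ≤ 2)
  | [], _, hne => absurd rfl hne
  | [a], hl, _ => by
    have ha : 1 ≤ a := hl a (by simp)
    refine ⟨?_, ?_⟩ <;> simp [betaComp, Nat.mul_factorial_pred (by omega : a ≠ 0)]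
  | a :: b :: l, hl, _ => by
    have ha : 1 ≤ a := hl a (by simp)
    have hb : 1 ≤ b := hl b (by simp)
    have hSdef : (b :: l).sum = b + l.sum := List.sum_cons
    set S := (b :: l).sum with hS'
    have hS : b ≤ S := by omega
    have hsum : (a :: b :: l).sum = a + S := by rw [List.sum_cons]
    have ih := key (b :: l) (fun x hx => hl x (by simp [hx])) (by simp)
    have hheadI : (b :: l).headI = b := rfl
    rw [hheadI] at ih
    have hbf : 0 < (b - 1).factorial := Nat.factorial_pos _
    have hstep :
        Nat.choose (a+b-1) b * a.factorial * (b * (S-1).factorial) * (b-1).factorial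
          = a * ((a+b-1).factorial * (S-1).factorial) := by
      have h2 := two_term a b ha hb
      have h4 : b.factorial = b * (b-1).factorial := (Nat.mul_factorial_pred (by omega : b ≠ 0)).symm
      calc Nat.choose (a+b-1) b * a.factorial * (b * (S-1).factorial) * (b-1).factorial
          = Nat.choose (a+b-1) b * (a.factorial * b.factorial) * (S-1).factorial := by
            rw [h4]; ring
        _ = a * ((a+b-1).factorial * (S-1).factorial) := by rw [h2]; ring
    have hratio : (a+b-1).factorial * (S-1).factorial
        ≤ (a+S-1).factorial * (b-1).factorial := by
      have := fact_ratio a (b-1) (S-1) (by omega)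
      rw [show b - 1 + a = a + b - 1 by omega, show S - 1 + a = a + S - 1 by omega] at this
      exact this
    have hmain : Nat.choose (a+b-1) b * a.factorial * (b * (S-1).factorial)
        ≤ a * (a + S - 1).factorial := by
      have h5 : Nat.choose (a+b-1) b * a.factorial * (b * (S-1).factorial) * (b-1).factorial
          ≤ a * (a + S - 1).factorial * (b-1).factorial := by
        rw [hstep]
        calc a * ((a+b-1).factorial * (S-1).factorial)
            ≤ a * ((a+S-1).factorial * (b-1).factorial) := Nat.mul_le_mul_left _ hratio
          _ = a * (a + S - 1).factorial * (b-1).factorial := by ring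
      exact Nat.le_of_mul_le_mul_right h5 hbf
    have hexpand : betaComp (a :: b :: l) * ((a :: b :: l).map Nat.factorial).prod
        = Nat.choose (a+b-1) b * a.factorial
            * (betaComp (b :: l) * ((b :: l).map Nat.factorial).prod) := by
      simp [betaComp, List.map_cons, List.prod_cons]; ring
    have hfinal : a * (a + S - 1).factorial
        = (a :: b :: l).headI * ((a :: b :: l).sum - 1).factorial := by
      rw [hsum]; rfl
    constructor
    · rw [hexpand]
      calc Nat.choose (a+b-1) b * a.factorial
            * (betaComp (b :: l) * ((b :: l).map Nat.factorial).prod)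
          ≤ Nat.choose (a+b-1) b * a.factorial * (b * (S-1).factorial) :=
            Nat.mul_le_mul_left _ ih.1
        _ ≤ a * (a + S - 1).factorial := hmain
        _ = (a :: b :: l).headI * ((a :: b :: l).sum - 1).factorial := hfinal
    · constructor
      · intro heq
        by_contra hlen
        have hlne : l ≠ [] := by
          intro h; rw [h] at hlen; simp at hlen
        have hSgt : b < S := by
          have h6 : 1 ≤ l.sum := by
            cases l with
            | nil => exact absurd rfl hlne
            | cons c l' =>
              have := hl c (by simp)
              rw [List.sum_cons]; omega
          omega
        have hratio' : (a+b-1).factorial * (S-1).factorial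
            < (a+S-1).factorial * (b-1).factorial := by
          have := fact_ratio_lt a (b-1) (S-1) ha (by omega)
          rw [show b - 1 + a = a + b - 1 by omega,
            show S - 1 + a = a + S - 1 by omega] at this
          exact this
        have hmain' : Nat.choose (a+b-1) b * a.factorial * (b * (S-1).factorial)
            < a * (a + S - 1).factorial := by
          have h5 : Nat.choose (a+b-1) b * a.factorial * (b * (S-1).factorial) * (b-1).factorial
              < a * (a + S - 1).factorial * (b-1).factorial := by
            rw [hstep]
            calc a * ((a+b-1).factorial * (S-1).factorial)
                < a * ((a+S-1).factorial * (b-1).factorial) :=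
                  mul_lt_mul_of_pos_left hratio' (by omega)
              _ = a * (a + S - 1).factorial * (b-1).factorial := by ring
          exact Nat.lt_of_mul_lt_mul_right h5
        have hstrict : betaComp (a :: b :: l) * ((a :: b :: l).map Nat.factorial).prod
            < (a :: b :: l).headI * ((a :: b :: l).sum - 1).factorial := by
          rw [hexpand]
          calc Nat.choose (a+b-1) b * a.factorial
                * (betaComp (b :: l) * ((b :: l).map Nat.factorial).prod)
              ≤ Nat.choose (a+b-1) b * a.factorial * (b * (S-1).factorial) :=
                Nat.mul_le_mul_left _ ih.1
            _ < a * (a + S - 1).factorial := hmain'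
            _ = (a :: b :: l).headI * ((a :: b :: l).sum - 1).factorial := hfinal
        omega
      · intro hlen
        have hl0 : l = [] := by
          cases l with
          | nil => rfl
          | cons c l' => simp at hlen
        subst hl0
        have h2 := two_term a b ha hb
        show betaComp [a, b] * ([a,b].map Nat.factorial).prod
            = [a,b].headI * (([a,b].sum) - 1).factorial
        have e1 : betaComp [a, b] = Nat.choose (a+b-1) b := by
          simp [betaComp]
        have e2 : ([a,b].map Nat.factorial).prod = a.factorial * b.factorial := by
          simp
        have e3 : [a,b].headI = a := rfl
        have e4 : [a,b].sum = a + b := by simp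
        rw [e1, e2, e3, e4, h2]

/-- For every composition `m = (m₁,…,m_ℓ)` of `N ≥ 1`,
`α(m) ≤ (1/N)·N!/(m₁!⋯m_ℓ!)`, with equality iff `ℓ = 1` or `ℓ = 2`. -/
theorem alpha_le_multinomial (N : ℕ) (hN : 1 ≤ N) (m : Composition N) :
    alphaComp m.blocks ≤ multinomComp m.blocks / N ∧
    (alphaComp m.blocks = multinomComp m.blocks / N ↔
      m.blocks.length = 1 ∨ m.blocks.length = 2) := by
  have hpos : ∀ x ∈ m.blocks, 1 ≤ x := fun x hx => m.one_le_blocks hx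
  have hsum : m.blocks.sum = N := m.blocks_sum
  have hne : m.blocks ≠ [] := by
    intro h; rw [h] at hsum; simp at hsum; omega
  obtain ⟨hle, hiff⟩ := key m.blocks hpos hne
  rw [hsum] at hle hiff
  have hlenpos : 1 ≤ m.blocks.length := List.length_pos_iff.mpr hne
  have hh : 1 ≤ m.blocks.headI := by
    cases hb : m.blocks with
    | nil => exact absurd hb hne
    | cons c l' => exact hpos c (by rw [hb]; simp)
  have hP : 0 < (m.blocks.map Nat.factorial).prod := by
    apply List.prod_pos
    intro x hx
    simp only [List.mem_map] at hx
    obtain ⟨y, _, rfl⟩ := hx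
    exact Nat.factorial_pos y
  have hNfac : (N : ℚ) ≠ 0 := by positivity
  have hPQ : (0:ℚ) < ((m.blocks.map Nat.factorial).prod : ℕ) := by exact_mod_cast hP
  have hhQ : (0:ℚ) < (m.blocks.headI : ℚ) := by exact_mod_cast hh
  have hfac : (Nat.factorial N : ℚ) = N * Nat.factorial (N - 1) := by
    rw_mod_cast [← Nat.mul_factorial_pred (by omega : N ≠ 0)]
  have hm : multinomComp m.blocks / N
      = (Nat.factorial (N-1) : ℚ) / (((m.blocks.map Nat.factorial).prod : ℕ) : ℚ) := by
    rw [multinomComp, hsum, hfac, div_div,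
      mul_comm ((((m.blocks.map Nat.factorial).prod : ℕ)) : ℚ) (N : ℚ)]
    exact mul_div_mul_left _ _ hNfac
  rw [hm, alphaComp]
  constructor
  · rw [div_le_div_iff₀ hhQ hPQ]
    have h2 : betaComp m.blocks * (m.blocks.map Nat.factorial).prod
        ≤ (N-1).factorial * m.blocks.headI := by
      calc betaComp m.blocks * (m.blocks.map Nat.factorial).prod
          ≤ m.blocks.headI * (N-1).factorial := hle
        _ = (N-1).factorial * m.blocks.headI := Nat.mul_comm _ _
    exact_mod_cast h2
  · rw [div_eq_div_iff hhQ.ne' hPQ.ne']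
    have hiff2 : betaComp m.blocks * (m.blocks.map Nat.factorial).prod
        = (N-1).factorial * m.blocks.headI
        ↔ (m.blocks.length = 1 ∨ m.blocks.length = 2) := by
      rw [Nat.mul_comm ((N-1).factorial), hiff]; omega
    rw [show ((betaComp m.blocks : ℚ) * (((m.blocks.map Nat.factorial).prod : ℕ) : ℚ))
        = ((betaComp m.blocks * (m.blocks.map Nat.factorial).prod : ℕ) : ℚ) from by
          push_cast; ring,
      show ((Nat.factorial (N-1) : ℚ) * (m.blocks.headI : ℚ))
        = (((N-1).factorial * m.blocks.headI : ℕ) : ℚ) from by push_cast; ring,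
      Nat.cast_inj]
    exact hiff2
end

section
/- For complex numbers t₁,…,t_n, the polynomial 𝔉(t₁,…,t_n) equals det(I + T), where T is the n×n matrix with T_{1,2} = t₁, T_{n,n-1} = t_n, and T_{k,k-1} = T_{k,k+1} = t_k for 2 ≤ k ≤ n−1, all other entries zero. -/
open scoped BigOperators

/-- Index tuples (k₁,…,k_m) with all kᵢ ≥ 1 and k_{i+1} ≥ k_i + 2. -/
def GapTuple (m : ℕ) (k : Fin m → ℕ) : Prop :=
  (∀ i, 1 ≤ k i) ∧ ∀ i j : Fin m, (i : ℕ) + 1 = (j : ℕ) → k i + 2 ≤ k j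

/-- The m-th term Σ_{k₁,…,k_m} x_{k₁}x_{k₁+1}⋯x_{k_m}x_{k_m+1} of the series defining 𝔉. -/
noncomputable def Fterm (x : ℕ → ℂ) (m : ℕ) : ℂ :=
  ∑' k : {k : Fin m → ℕ // GapTuple m k}, ∏ i, x (k.1 i) * x (k.1 i + 1)

/-- The function 𝔉, with the sequence `x` 1-indexed (`x 0` is ignored). -/
noncomputable def Ffun (x : ℕ → ℂ) : ℂ :=
  1 + ∑' m : ℕ, (-1 : ℂ) ^ (m + 1) * Fterm x (m + 1)

/-- 𝔉(t₁,…,t_n), i.e. 𝔉 applied to the sequence (t₁,…,t_n,0,0,…). -/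
noncomputable def Ffin (n : ℕ) (t : ℕ → ℂ) : ℂ :=
  Ffun fun k => if 1 ≤ k ∧ k ≤ n then t k else 0

/-! ### Auxiliary definitions -/

/-- Gap tuples with all values `< n`, as a finite set. -/
noncomputable def Dset (n m : ℕ) : Finset (Fin m → ℕ) :=
  @Finset.filter _ (GapTuple m) (Classical.decPred _)
    (Fintype.piFinset fun _ => Finset.range n)

lemma mem_Dset {n m : ℕ} {k : Fin m → ℕ} :
    k ∈ Dset n m ↔ (∀ i, k i < n) ∧ GapTuple m k := by
  classical
  simp [Dset, Fintype.mem_piFinset, Finset.mem_range]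

lemma gap_add {m : ℕ} {k : Fin m → ℕ} (h : GapTuple m k) :
    ∀ d : ℕ, ∀ i j : Fin m, (i : ℕ) + d = (j : ℕ) → k i + 2 * d ≤ k j := by
  intro d
  induction d with
  | zero => intro i j hij; have : i = j := Fin.ext (by omega); simp [this]
  | succ d ih =>
      intro i j hij
      have hjm : (i : ℕ) + d < m := by omega
      have h1 := ih i ⟨(i : ℕ) + d, hjm⟩ rfl
      have h2 := h.2 ⟨(i : ℕ) + d, hjm⟩ j (by simp; omega)
      omega

lemma gap_lb {m : ℕ} {k : Fin m → ℕ} (h : GapTuple m k) (j : Fin m) :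
    2 * (j : ℕ) + 1 ≤ k j := by
  have hm : 0 < m := j.pos
  have := gap_add h (j : ℕ) ⟨0, hm⟩ j (by simp)
  have := h.1 ⟨0, hm⟩
  omega

lemma Dset_empty {n m : ℕ} (h : n < 2 * m) : Dset n m = ∅ := by
  ext k
  simp only [mem_Dset, Finset.notMem_empty, iff_false, not_and]
  intro hk hg
  have hm : 0 < m := by omega
  have h1 := gap_lb hg ⟨m - 1, by omega⟩
  have h2 := hk ⟨m - 1, by omega⟩
  simp at h1 h2
  omega

/-- The sum over all gap tuples of length `m` with values `≤ n-1`. -/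
noncomputable def Ssum (t : ℕ → ℂ) (n m : ℕ) : ℂ :=
  ∑ k ∈ Dset n m, ∏ i, t (k i) * t (k i + 1)

lemma Ssum_zero (t : ℕ → ℂ) (n : ℕ) : Ssum t n 0 = 1 := by
  have : Dset n 0 = {(fun i => 0 : Fin 0 → ℕ)} := by
    ext k
    simp [mem_Dset, GapTuple]
    funext i; exact i.elim0
  simp [Ssum, this]

lemma Ssum_big (t : ℕ → ℂ) {n m : ℕ} (h : n < 2 * m) : Ssum t n m = 0 := by
  rw [Ssum, Dset_empty h, Finset.sum_empty]

/-! ### The series is a finite sum -/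

lemma Fterm_eq (t : ℕ → ℂ) (n m : ℕ) :
    Fterm (fun k => if 1 ≤ k ∧ k ≤ n then t k else 0) m = Ssum t n m := by
  classical
  set x : ℕ → ℂ := fun k => if 1 ≤ k ∧ k ≤ n then t k else 0 with hx
  rw [Fterm, tsum_eq_sum (s := (Dset n m).subtype (GapTuple m)) ?h0]
  · refine (Finset.sum_subtype_eq_sum_filter
        (fun k : Fin m → ℕ => ∏ i, x (k i) * x (k i + 1))).trans ?_
    have hfil : (Dset n m).filter (GapTuple m) = Dset n m := by
      apply Finset.filter_true_of_mem
      intro k hk; exact (mem_Dset.mp hk).2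
    rw [hfil, Ssum]
    apply Finset.sum_congr rfl
    intro k hk
    obtain ⟨hlt, hg⟩ := mem_Dset.mp hk
    apply Finset.prod_congr rfl
    intro i _
    have h1 : 1 ≤ k i := hg.1 i
    have h2 : k i < n := hlt i
    simp only [hx]
    rw [if_pos ⟨h1, by omega⟩, if_pos ⟨by omega, by omega⟩]
  · intro b hb
    have hbs : b.1 ∉ Dset n m := by
      intro hmem
      exact hb (by simpa [Finset.mem_subtype] using hmem)
    rw [mem_Dset] at hbs
    push_neg at hbs
    have h2 : ¬ ∀ i, b.1 i < n := fun h => hbs h b.2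
    push_neg at h2
    obtain ⟨i, hi⟩ := h2
    apply Finset.prod_eq_zero (Finset.mem_univ i)
    have hni : ¬ (1 ≤ b.1 i + 1 ∧ b.1 i + 1 ≤ n) := by omega
    simp only [hx, if_neg hni, mul_zero]

lemma Ffin_eq_Q (t : ℕ → ℂ) (n : ℕ) :
    Ffin n t = ∑ m ∈ Finset.range (n + 1), (-1 : ℂ) ^ m * Ssum t n m := by
  rw [Ffin, Ffun]
  have h1 : (∑' m : ℕ, (-1 : ℂ) ^ (m + 1) *
      Fterm (fun k => if 1 ≤ k ∧ k ≤ n then t k else 0) (m + 1)) =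
      ∑ m ∈ Finset.range n, (-1 : ℂ) ^ (m + 1) * Ssum t n (m + 1) := by
    rw [tsum_eq_sum (s := Finset.range n)]
    · exact Finset.sum_congr rfl fun m _ => by rw [Fterm_eq]
    · intro m hm
      rw [Finset.mem_range, not_lt] at hm
      rw [Fterm_eq, Ssum, Dset_empty (by omega), Finset.sum_empty, mul_zero]
  rw [h1, Finset.sum_range_succ']
  simp [Ssum_zero]
  ring

/-! ### The recurrence for `Ssum` -/

lemma Ssum_rec (t : ℕ → ℂ) (N m : ℕ) :
    Ssum t (N + 2) (m + 1) =
      Ssum t (N + 1) (m + 1) + t (N + 1) * t (N + 2) * Ssum t N m := by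
  classical
  have hsplit := Finset.sum_filter_add_sum_filter_not (Dset (N + 2) (m + 1))
    (fun k => k (Fin.last m) = N + 1)
    (fun k => ∏ i, t (k i) * t (k i + 1))
  -- the "not" part is Dset (N+1) (m+1)
  have hnot : (Dset (N + 2) (m + 1)).filter (fun k => ¬ k (Fin.last m) = N + 1)
      = Dset (N + 1) (m + 1) := by
    ext k
    simp only [Finset.mem_filter, mem_Dset]
    constructor
    · rintro ⟨⟨hlt, hg⟩, hne⟩
      refine ⟨fun i => ?_, hg⟩
      have h1 := gap_add hg (m - (i : ℕ)) i (Fin.last m) (by simp [Fin.last]; omega)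
      have h2 := hlt (Fin.last m)
      have h3 := hlt i
      omega
    · rintro ⟨hlt, hg⟩
      exact ⟨⟨fun i => by have := hlt i; omega, hg⟩, by have := hlt (Fin.last m); omega⟩
  -- the fiber part equals t(N+1)t(N+2) * Ssum t N m
  have hfib : ((Dset (N + 2) (m + 1)).filter (fun k => k (Fin.last m) = N + 1)).sum
      (fun k => ∏ i, t (k i) * t (k i + 1))
      = t (N + 1) * t (N + 2) * Ssum t N m := by
    rw [Ssum, Finset.mul_sum]
    refine Finset.sum_nbij' (i := fun k => Fin.init k) (j := fun k => Fin.snoc k (N + 1))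
      ?_ ?_ ?_ ?_ ?_
    · intro k hk
      simp only [Finset.mem_filter, mem_Dset] at hk
      obtain ⟨⟨hlt, hg⟩, hlast⟩ := hk
      rw [mem_Dset]
      constructor
      · intro i
        have h1 := gap_add hg (m - (i : ℕ)) (Fin.castSucc i) (Fin.last m)
          (by simp [Fin.last])
        have h2 : 1 ≤ m - (i : ℕ) := by have := i.2; omega
        rw [hlast] at h1
        simp only [Fin.init]
        omega
      · constructor
        · intro i; exact hg.1 _
        · intro i j hij
          exact hg.2 (Fin.castSucc i) (Fin.castSucc j) (by simpa using hij)
    · intro k hk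
      rw [mem_Dset] at hk
      obtain ⟨hlt, hg⟩ := hk
      simp only [Finset.mem_filter, mem_Dset]
      refine ⟨⟨fun i => ?_, ?_, ?_⟩, by simp⟩
      · induction i using Fin.lastCases with
        | last => simp
        | cast j => rw [Fin.snoc_castSucc]; have := hlt j; omega
      · intro i
        induction i using Fin.lastCases with
        | last => simp
        | cast j => rw [Fin.snoc_castSucc]; exact hg.1 j
      · intro i j hij
        have him : (i : ℕ) < m := by have := j.2; omega
        have hi' : i = Fin.castSucc ⟨(i : ℕ), him⟩ := by ext; simp
        rcases eq_or_lt_of_le (Nat.lt_succ_iff.mp j.2) with hj | hj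
        · have hj' : j = Fin.last m := by ext; simp [hj]
          rw [hi', hj', Fin.snoc_castSucc, Fin.snoc_last]
          have := hlt ⟨(i : ℕ), him⟩
          omega
        · have hj' : j = Fin.castSucc ⟨(j : ℕ), hj⟩ := by ext; simp
          rw [hi', hj', Fin.snoc_castSucc, Fin.snoc_castSucc]
          exact hg.2 _ _ (by simpa using hij)
    · intro k hk
      simp only [Finset.mem_filter] at hk
      conv_rhs => rw [← Fin.snoc_init_self k]
      rw [hk.2]
    · intro k _; exact Fin.init_snoc _ _
    · intro k hk
      simp only [Finset.mem_filter] at hk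
      rw [Fin.prod_univ_castSucc, hk.2]
      simp only [Fin.init]
      ring
  rw [Ssum, ← hsplit, hnot, hfib]
  simp only [Ssum]
  ring

/-! ### `Qsum` and the polynomial recurrence -/

noncomputable def Qsum (t : ℕ → ℂ) (n : ℕ) : ℂ :=
  ∑ m ∈ Finset.range (n + 1), (-1 : ℂ) ^ m * Ssum t n m

noncomputable def Pfun (t : ℕ → ℂ) : ℕ → ℂ
  | 0 => 1
  | 1 => 1
  | n + 2 => Pfun t (n + 1) - t (n + 1) * t (n + 2) * Pfun t n

lemma Qsum_zero (t : ℕ → ℂ) : Qsum t 0 = 1 := by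
  simp [Qsum, Ssum_zero]

lemma Qsum_one (t : ℕ → ℂ) : Qsum t 1 = 1 := by
  rw [Qsum]
  rw [Finset.sum_range_succ, Finset.sum_range_one, Ssum_zero, Ssum_big t (by omega)]
  ring

lemma Qsum_rec (t : ℕ → ℂ) (N : ℕ) :
    Qsum t (N + 2) = Qsum t (N + 1) - t (N + 1) * t (N + 2) * Qsum t N := by
  have e1 : Qsum t (N + 2) =
      (∑ m ∈ Finset.range (N + 2), (-1 : ℂ) ^ (m + 1) * Ssum t (N + 2) (m + 1)) + 1 := by
    rw [Qsum, Finset.sum_range_succ', Ssum_zero]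
    ring
  rw [e1]
  have hcong : ∀ m ∈ Finset.range (N + 2),
      (-1 : ℂ) ^ (m + 1) * Ssum t (N + 2) (m + 1) =
      (-1 : ℂ) ^ (m + 1) * Ssum t (N + 1) (m + 1) +
        (-(t (N + 1) * t (N + 2))) * ((-1 : ℂ) ^ m * Ssum t N m) := by
    intro m _
    rw [Ssum_rec]
    ring
  rw [Finset.sum_congr rfl hcong, Finset.sum_add_distrib, ← Finset.mul_sum]
  have hA : ∑ m ∈ Finset.range (N + 2), (-1 : ℂ) ^ (m + 1) * Ssum t (N + 1) (m + 1)
      = ∑ m ∈ Finset.range (N + 1), (-1 : ℂ) ^ (m + 1) * Ssum t (N + 1) (m + 1) := by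
    rw [Finset.sum_range_succ, Ssum_big t (by omega), mul_zero, add_zero]
  have hB : ∑ m ∈ Finset.range (N + 2), (-1 : ℂ) ^ m * Ssum t N m = Qsum t N := by
    rw [Finset.sum_range_succ, Ssum_big t (by omega), mul_zero, add_zero, Qsum]
  have hQ1 : Qsum t (N + 1) =
      (∑ m ∈ Finset.range (N + 1), (-1 : ℂ) ^ (m + 1) * Ssum t (N + 1) (m + 1)) + 1 := by
    rw [Qsum, Finset.sum_range_succ', Ssum_zero]
    ring
  rw [hA, hB, hQ1]
  ring

lemma Qsum_eq_P (t : ℕ → ℂ) : ∀ n, Qsum t n = Pfun t n := by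
  have key : ∀ n, Qsum t n = Pfun t n ∧ Qsum t (n + 1) = Pfun t (n + 1) := by
    intro n
    induction n with
    | zero => exact ⟨by rw [Qsum_zero]; rfl, by rw [Qsum_one]; rfl⟩
    | succ n ih =>
        refine ⟨ih.2, ?_⟩
        rw [Qsum_rec, ih.1, ih.2]
        rfl
  exact fun n => (key n).1

/-! ### The determinant side -/

noncomputable def Mmat (t : ℕ → ℂ) (n : ℕ) : Matrix (Fin n) (Fin n) ℂ :=
  fun i j => if (j : ℕ) = (i : ℕ) + 1 ∨ (i : ℕ) = (j : ℕ) + 1 then t ((i : ℕ) + 1) else 0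

lemma val_succAbove {k : ℕ} (p : Fin (k + 1)) (i : Fin k) :
    ((p.succAbove i) : ℕ) = if (i : ℕ) < (p : ℕ) then (i : ℕ) else (i : ℕ) + 1 := by
  rw [Fin.succAbove]
  rcases lt_or_ge ((i : ℕ)) ((p : ℕ)) with h | h
  · rw [if_pos, if_pos h]
    · simp
    · simpa [Fin.lt_def] using h
  · rw [if_neg, if_neg (by omega)]
    · simp
    · simpa [Fin.lt_def] using h

lemma Amat_apply (t : ℕ → ℂ) (n : ℕ) (i j : Fin n) :
    (1 + Mmat t n) i j = (if (i : ℕ) = (j : ℕ) then (1 : ℂ) else 0) +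
      (if (j : ℕ) = (i : ℕ) + 1 ∨ (i : ℕ) = (j : ℕ) + 1 then t ((i : ℕ) + 1) else 0) := by
  simp only [Matrix.add_apply, Mmat, Matrix.one_apply, Fin.ext_iff]

lemma det_Amat_zero (t : ℕ → ℂ) : Matrix.det (1 + Mmat t 0) = 1 :=
  Matrix.det_fin_zero

lemma det_Amat_one (t : ℕ → ℂ) : Matrix.det (1 + Mmat t 1) = 1 := by
  rw [Matrix.det_fin_one, Amat_apply]
  norm_num

lemma det_Amat_rec (t : ℕ → ℂ) (n : ℕ) :
    Matrix.det (1 + Mmat t (n + 2)) = Matrix.det (1 + Mmat t (n + 1)) -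
      t (n + 1) * t (n + 2) * Matrix.det (1 + Mmat t n) := by
  have hA := Amat_apply t (n + 2)
  set A := 1 + Mmat t (n + 2) with hAdef
  set p : Fin (n + 2) := ⟨n, by omega⟩ with hp
  rw [Matrix.det_succ_row A (Fin.last (n + 1))]
  rw [Fintype.sum_eq_add p (Fin.last (n + 1)) (by simp [hp, Fin.ext_iff])
    (fun c ⟨hc1, hc2⟩ => by
      have hv1 : (c : ℕ) ≠ n := fun h => hc1 (Fin.ext (by simp [hp, h]))
      have hv2 : (c : ℕ) ≠ n + 1 := fun h => hc2 (Fin.ext (by simp [h]))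
      have hcv := c.2
      rw [hA]
      rw [if_neg (by simp; omega), if_neg (by simp; omega)]
      ring)]
  -- second minor = 1 + Mmat t (n+1)
  have hsub2 : A.submatrix (Fin.last (n + 1)).succAbove (Fin.last (n + 1)).succAbove
      = 1 + Mmat t (n + 1) := by
    ext i j
    rw [Matrix.submatrix_apply, Fin.succAbove_last, hA, Amat_apply]
    simp
  -- first minor: expand along last column
  set B := A.submatrix (Fin.last (n + 1)).succAbove p.succAbove with hB
  have hdetB : B.det = t (n + 1) * Matrix.det (1 + Mmat t n) := by
    rw [Matrix.det_succ_column B (Fin.last n)]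
    rw [Fintype.sum_eq_single (Fin.last n) (fun c hc => by
      have hv : (c : ℕ) ≠ n := fun h => hc (Fin.ext (by simp [h]))
      have hcv := c.2
      rw [hB, Matrix.submatrix_apply, Fin.succAbove_last, hA]
      have h1 : ((p.succAbove (Fin.last n)) : ℕ) = n + 1 := by
        rw [val_succAbove]; simp [hp]
      rw [if_neg (by simp [h1]; omega), if_neg (by simp [h1]; omega)]
      ring)]
    have hval : B (Fin.last n) (Fin.last n) = t (n + 1) := by
      rw [hB, Matrix.submatrix_apply, Fin.succAbove_last, hA]
      have h1 : ((p.succAbove (Fin.last n)) : ℕ) = n + 1 := by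
        rw [val_succAbove]; simp [hp]
      rw [if_neg (by simp [h1]), if_pos (by simp [h1])]
      simp
    have hsub1 : B.submatrix (Fin.last n).succAbove (Fin.last n).succAbove
        = 1 + Mmat t n := by
      ext i j
      rw [Matrix.submatrix_apply, Fin.succAbove_last, hB, Matrix.submatrix_apply,
        Fin.succAbove_last, hA, Amat_apply]
      have h2 : ((p.succAbove j.castSucc) : ℕ) = (j : ℕ) := by
        rw [val_succAbove]
        have := j.2
        simp [hp]
      rw [h2]
      simp
    rw [hval, hsub1]
    simp [Fin.last]
  have hlast_p : A (Fin.last (n + 1)) p = t (n + 2) := by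
    rw [hA, if_neg (by simp [hp]), if_pos (by simp [hp])]
    simp
  have hlast_last : A (Fin.last (n + 1)) (Fin.last (n + 1)) = 1 := by
    rw [hA, if_pos (by simp), if_neg (by simp)]
    simp
  rw [hsub2, hlast_p, hlast_last, hdetB]
  simp [hp, Fin.last]
  ring

lemma det_eq_P (t : ℕ → ℂ) : ∀ n, Matrix.det (1 + Mmat t n) = Pfun t n := by
  have key : ∀ n, Matrix.det (1 + Mmat t n) = Pfun t n ∧
      Matrix.det (1 + Mmat t (n + 1)) = Pfun t (n + 1) := by
    intro n
    induction n with
    | zero => exact ⟨by rw [det_Amat_zero]; rfl, by rw [det_Amat_one]; rfl⟩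
    | succ n ih =>
        refine ⟨ih.2, ?_⟩
        rw [det_Amat_rec, ih.1, ih.2]
        rfl
  exact fun n => (key n).1

/-- 𝔉(t₁,…,t_n) = det(I + T) where T is the tridiagonal matrix with zero diagonal and
T_{k,k-1} = T_{k,k+1} = t_k. -/
theorem Ffin_eq_det (n : ℕ) (hn : 1 ≤ n) (t : ℕ → ℂ)
    (T : Matrix (Fin n) (Fin n) ℂ)
    (hT : ∀ i j : Fin n,
      T i j = if (j : ℕ) = (i : ℕ) + 1 ∨ (i : ℕ) = (j : ℕ) + 1 then t ((i : ℕ) + 1) else 0) :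
    Ffin n t = Matrix.det (1 + T) := by
  have hTM : T = Mmat t n := by
    ext i j
    rw [hT]
    rfl
  rw [hTM, det_eq_P, ← Qsum_eq_P, Ffin_eq_Q, Qsum]
end

section
/- Let x = (x_k)_{k≥1} be a sequence of complex numbers with Σ_{k=1}^{∞} |x_k x_{k+1}| < ∞. Then the defining series for 𝔉(x) converges absolutely and |𝔉(x)| ≤ exp(Σ_{k=1}^{∞} |x_k x_{k+1}|) and |𝔉(x) − 1| ≤ exp(Σ_{k=1}^{∞} |x_k x_{k+1}|) − 1. -/
open scoped BigOperators Nat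

section Aux

variable {a : ℕ → ℝ}

lemma pi_summable (ha0 : ∀ k, 0 ≤ a k) (ha : Summable a) (m : ℕ) :
    Summable (fun h : Fin m → ℕ => ∏ i, a (h i)) ∧
    ∑' h : Fin m → ℕ, ∏ i, a (h i) = (∑' k, a k) ^ m := by
  induction m with
  | zero =>
      constructor
      · exact Summable.of_finite
      · rw [tsum_eq_single (default : Fin 0 → ℕ) (fun b hb => absurd (Subsingleton.elim b default) hb)]
        simp
  | succ m ih =>
      set e := Fin.consEquiv (fun _ : Fin (m + 1) => ℕ) with he
      have hcomp : ∀ p : ℕ × (Fin m → ℕ),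
          (∏ i, a ((e p) i)) = a p.1 * ∏ i, a (p.2 i) := by
        intro p
        rw [Fin.prod_univ_succ]
        simp [he, Fin.consEquiv]
      have hsum2 : Summable (fun p : ℕ × (Fin m → ℕ) => a p.1 * ∏ i, a (p.2 i)) :=
        Summable.mul_of_nonneg (f := a) (g := fun h : Fin m → ℕ => ∏ i, a (h i)) ha ih.1 ha0 (fun h => Finset.prod_nonneg fun i _ => ha0 _)
      have hsum : Summable (fun h : Fin (m+1) → ℕ => ∏ i, a (h i)) := by
        rw [← e.summable_iff]
        exact hsum2.congr fun p => (hcomp p).symm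
      refine ⟨hsum, ?_⟩
      have h1 : ∑' h : Fin (m+1) → ℕ, ∏ i, a (h i)
          = ∑' p : ℕ × (Fin m → ℕ), a p.1 * ∏ i, a (p.2 i) := by
        rw [← e.tsum_eq]
        exact tsum_congr hcomp
      rw [h1, Summable.tsum_prod hsum2]
      simp_rw [tsum_mul_left, tsum_mul_right]
      rw [ih.2, pow_succ, mul_comm]

lemma GapTuple.strictMono {m : ℕ} {k : Fin m → ℕ} (h : GapTuple m k) : StrictMono k := by
  cases m with
  | zero => intro i; exact absurd i.2 (by omega)
  | succ n =>
      rw [Fin.strictMono_iff_lt_succ]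
      intro i
      have := h.2 (Fin.castSucc i) i.succ (by simp)
      omega

end Aux

/-- If Σ|x_k x_{k+1}| < ∞ then the series defining 𝔉(x) converges absolutely and
|𝔉(x)| ≤ exp(Σ|x_k x_{k+1}|), |𝔉(x) − 1| ≤ exp(Σ|x_k x_{k+1}|) − 1. -/
theorem Ffun_bounds (x : ℕ → ℂ)
    (hx : Summable fun k : ℕ => ‖x (k + 1) * x (k + 2)‖) :
    (∀ m : ℕ, Summable fun k : {k : Fin m → ℕ // GapTuple m k} =>
        ‖∏ i, x (k.1 i) * x (k.1 i + 1)‖) ∧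
    (Summable fun m : ℕ => ‖(-1 : ℂ) ^ (m + 1) * Fterm x (m + 1)‖) ∧
    ‖Ffun x‖ ≤ Real.exp (∑' k : ℕ, ‖x (k + 1) * x (k + 2)‖) ∧
    ‖Ffun x - 1‖ ≤ Real.exp (∑' k : ℕ, ‖x (k + 1) * x (k + 2)‖) - 1 := by
  set a : ℕ → ℝ := fun k => ‖x (k + 1) * x (k + 2)‖ with ha_def
  have ha0 : ∀ k, 0 ≤ a k := fun k => norm_nonneg _
  set S : ℝ := ∑' k, a k with hS_def
  have hS0 : 0 ≤ S := tsum_nonneg ha0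
  -- the norm of each product equals a product of `a`'s
  have hval : ∀ {m : ℕ} (k : {k : Fin m → ℕ // GapTuple m k}),
      ‖∏ i, x (k.1 i) * x (k.1 i + 1)‖ = ∏ i, a (k.1 i - 1) := by
    intro m k
    rw [norm_prod]
    refine Finset.prod_congr rfl fun i _ => ?_
    have h1 : 1 ≤ k.1 i := k.2.1 i
    have e1 : k.1 i - 1 + 1 = k.1 i := by omega
    have e2 : k.1 i - 1 + 2 = k.1 i + 1 := by omega
    rw [ha_def]; dsimp only; rw [e1, e2]
  -- the shifted injection into all tuples
  have hinj : ∀ m : ℕ, Function.Injective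
      (fun k : {k : Fin m → ℕ // GapTuple m k} => (fun i => k.1 i - 1 : Fin m → ℕ)) := by
    intro m k k' h
    ext i
    have := congrFun h i
    have h1 := k.2.1 i
    have h2 := k'.2.1 i
    dsimp at this
    omega
  have hpis := pi_summable ha0 hx
  -- summability over gap tuples
  have hsummable : ∀ m : ℕ, Summable fun k : {k : Fin m → ℕ // GapTuple m k} =>
      ‖∏ i, x (k.1 i) * x (k.1 i + 1)‖ := by
    intro m
    have : Summable (fun k : {k : Fin m → ℕ // GapTuple m k} => ∏ i, a (k.1 i - 1)) :=
      ((hpis m).1).comp_injective (hinj m)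
    exact this.congr fun k => (hval k).symm
  -- factorial bound
  have hbound : ∀ m : ℕ,
      (∑' k : {k : Fin m → ℕ // GapTuple m k}, ∏ i, a (k.1 i - 1)) ≤ S ^ m / m ! := by
    intro m
    set G : {k : Fin m → ℕ // GapTuple m k} → ℝ := fun k => ∏ i, a (k.1 i - 1) with hG
    have hGsum : Summable G := ((hpis m).1).comp_injective (hinj m)
    set Φ : {k : Fin m → ℕ // GapTuple m k} × Equiv.Perm (Fin m) → (Fin m → ℕ) :=
      fun p => fun i => p.1.1 (p.2 i) - 1 with hΦ
    have hΦinj : Function.Injective Φ := by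
      rintro ⟨k, σ⟩ ⟨k', σ'⟩ h
      have hks : ∀ i, k.1 (σ i) = k'.1 (σ' i) := by
        intro i
        have this : k.1 (σ i) - 1 = k'.1 (σ' i) - 1 := congrFun h i
        have h1 := k.2.1 (σ i)
        have h2 := k'.2.1 (σ' i)
        omega
      have hcomp : k.1 ∘ σ = k'.1 ∘ σ' := funext hks
      have hrange : Set.range k.1 = Set.range k'.1 := by
        rw [← σ.surjective.range_comp k.1, ← σ'.surjective.range_comp k'.1]
        exact congrArg Set.range hcomp
      have : WellFoundedLT (Fin m) := Finite.to_wellFoundedLT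
      have hkk : k.1 = k'.1 := (k.2.strictMono.range_inj k'.2.strictMono).1 hrange
      have hσ : σ = σ' := by
        ext i
        have := hks i
        rw [hkk] at this
        exact congrArg Fin.val (k'.2.strictMono.injective this)
      exact Prod.ext (Subtype.ext hkk) hσ
    have hΦval : ∀ p, (∏ i, a (Φ p i)) = G p.1 := by
      rintro ⟨k, σ⟩
      exact Equiv.prod_comp σ fun i => a (k.1 i - 1)
    have hGsum' : Summable (fun p : {k : Fin m → ℕ // GapTuple m k} × Equiv.Perm (Fin m) =>
        G p.1) := by
      have := ((hpis m).1).comp_injective hΦinj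
      exact this.congr fun p => hΦval p
    have hle : (∑' p : {k : Fin m → ℕ // GapTuple m k} × Equiv.Perm (Fin m), G p.1)
        ≤ S ^ m := by
      rw [← (hpis m).2]
      refine Summable.tsum_le_tsum_of_inj Φ hΦinj
        (fun c _ => Finset.prod_nonneg fun i _ => ha0 _)
        (fun p => (hΦval p).ge) hGsum' (hpis m).1
    have hcard : (∑' p : {k : Fin m → ℕ // GapTuple m k} × Equiv.Perm (Fin m), G p.1)
        = (m ! : ℝ) * ∑' k, G k := by
      rw [Summable.tsum_prod hGsum']
      have : ∀ k : {k : Fin m → ℕ // GapTuple m k},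
          (∑' _ : Equiv.Perm (Fin m), G k) = (m ! : ℝ) * G k := by
        intro k
        rw [tsum_const, Nat.card_eq_fintype_card, Fintype.card_perm, Fintype.card_fin,
          nsmul_eq_mul]
      rw [tsum_congr this, tsum_mul_left]
    rw [hcard] at hle
    rw [le_div_iff₀ (by positivity : (0:ℝ) < (m ! : ℝ)), mul_comm]
    exact hle
  -- Fterm bound
  have hFterm : ∀ m : ℕ, ‖Fterm x m‖ ≤ S ^ m / m ! := by
    intro m
    refine le_trans (norm_tsum_le_tsum_norm (hsummable m)) ?_
    calc (∑' k : {k : Fin m → ℕ // GapTuple m k}, ‖∏ i, x (k.1 i) * x (k.1 i + 1)‖)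
        = ∑' k : {k : Fin m → ℕ // GapTuple m k}, ∏ i, a (k.1 i - 1) :=
          tsum_congr fun k => hval k
      _ ≤ S ^ m / m ! := hbound m
  -- summability in m
  have hmaj : Summable (fun m : ℕ => S ^ (m + 1) / (m + 1)!) :=
    (Real.summable_pow_div_factorial S).comp_injective Nat.succ_injective
  have hnorm_eq : ∀ m : ℕ, ‖(-1 : ℂ) ^ (m + 1) * Fterm x (m + 1)‖ = ‖Fterm x (m + 1)‖ := by
    intro m
    rw [norm_mul, norm_pow, norm_neg, norm_one, one_pow, one_mul]
  have hmsummable : Summable fun m : ℕ => ‖(-1 : ℂ) ^ (m + 1) * Fterm x (m + 1)‖ := by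
    refine Summable.of_nonneg_of_le (fun m => norm_nonneg _) (fun m => ?_) hmaj
    rw [hnorm_eq m]; exact hFterm (m + 1)
  -- the exponential identity
  have hexp : (∑' n : ℕ, S ^ n / n !) = Real.exp S := by
    rw [Real.exp_eq_exp_ℝ, NormedSpace.exp_eq_tsum_div]
  have hexps : Summable (fun n : ℕ => S ^ n / n !) := Real.summable_pow_div_factorial S
  have htail : (∑' m : ℕ, S ^ (m + 1) / (m + 1)!) = Real.exp S - 1 := by
    have := Summable.tsum_eq_zero_add hexps
    rw [hexp] at this
    simp only [pow_zero, Nat.factorial_zero, Nat.cast_one, div_one] at this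
    linarith
  -- bound on the series
  have hT : ‖∑' m : ℕ, (-1 : ℂ) ^ (m + 1) * Fterm x (m + 1)‖ ≤ Real.exp S - 1 := by
    refine le_trans (norm_tsum_le_tsum_norm hmsummable) ?_
    rw [← htail]
    refine Summable.tsum_le_tsum (fun m => ?_) hmsummable hmaj
    rw [hnorm_eq m]; exact hFterm (m + 1)
  refine ⟨hsummable, hmsummable, ?_, ?_⟩
  · calc ‖Ffun x‖ ≤ ‖(1 : ℂ)‖ + ‖∑' m : ℕ, (-1 : ℂ) ^ (m + 1) * Fterm x (m + 1)‖ :=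
        norm_add_le _ _
    _ ≤ 1 + (Real.exp S - 1) := by rw [norm_one]; linarith
    _ = Real.exp S := by ring
  · have : Ffun x - 1 = ∑' m : ℕ, (-1 : ℂ) ^ (m + 1) * Fterm x (m + 1) := by
      rw [Ffun]; ring
    rw [this]
    exact hT
end
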